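/- arXiv:1902.10878 — 9 statements merged into one kernel-verified Lean document; each statement's English description precedes it below -/
import Mathlib

section
/- Let x, y ∈ (0,1]. Then every graph G that is (x,y)-constrained via a tripartition (A,B,C) contains a vertex v ∈ C with |N²_A(v)| ≥ max(x,y)·|A|. -/
open Set

/-- A set of vertices is stable if no two of its members are adjacent. -/
def StableSet {V : Type*} (G : SimpleGraph V) (S : Set V) : Prop :=
  ∀ u ∈ S, ∀ v ∈ S, ¬ G.Adj u v

/-- A tripartition of a graph `G` is a partition of its vertex set into three
nonempty stable sets. -/
def IsTripartition {V : Type*} (G : SimpleGraph V) (A B C : Set V) : Prop :=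
  A.Nonempty ∧ B.Nonempty ∧ C.Nonempty ∧
  Disjoint A B ∧ Disjoint A C ∧ Disjoint B C ∧
  A ∪ B ∪ C = Set.univ ∧
  StableSet G A ∧ StableSet G B ∧ StableSet G C

/-- The number of neighbours of `v` inside the set `S`. -/
noncomputable def nbrCard {V : Type*} (G : SimpleGraph V) (v : V) (S : Set V) : ℕ :=
  (S ∩ G.neighborSet v).ncard

/-- `G` is `(x,y)`-constrained via the tripartition `(A,B,C)`. -/
def Constrained {V : Type*} (G : SimpleGraph V) (x y : ℝ) (A B C : Set V) : Prop :=
  IsTripartition G A B C ∧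
  (∀ v ∈ A, x * B.ncard ≤ (nbrCard G v B : ℝ)) ∧
  (∀ v ∈ B, y * C.ncard ≤ (nbrCard G v C : ℝ)) ∧
  (∀ u ∈ A, ∀ v ∈ C, ¬ G.Adj u v)

/-- `G` is `(x,y)`-biconstrained via the tripartition `(A,B,C)`. -/
def Biconstrained {V : Type*} (G : SimpleGraph V) (x y : ℝ) (A B C : Set V) : Prop :=
  Constrained G x y A B C ∧
  (∀ v ∈ B, x * A.ncard ≤ (nbrCard G v A : ℝ)) ∧
  (∀ v ∈ C, y * B.ncard ≤ (nbrCard G v B : ℝ))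

/-- `N²(v)`: the set of vertices at distance exactly two from `v`. -/
def N2 {V : Type*} (G : SimpleGraph V) (v : V) : Set V :=
  {u | ¬ G.Adj v u ∧ v ≠ u ∧ ∃ w, G.Adj v w ∧ G.Adj w u}

/-- `|N²(v) ∩ A|`. -/
noncomputable def n2card {V : Type*} (G : SimpleGraph V) (v : V) (A : Set V) : ℕ :=
  (N2 G v ∩ A).ncard

lemma ncard_sep_eq_filter {V : Type} {S : Set V} (hS : S.Finite) (p : V → Prop) [DecidablePred p] :
    ({u ∈ S | p u} : Set V).ncard = (hS.toFinset.filter p).card := by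
  rw [← Set.ncard_coe_finset]
  congr 1
  ext u
  simp

lemma double_count {V : Type} (s t : Finset V) (r : V → V → Prop)
    [∀ a, DecidablePred (r a)] :
    ∑ a ∈ s, (t.filter (r a)).card = ∑ b ∈ t, (s.filter (fun a => r a b)).card := by
  simp_rw [Finset.card_filter]
  exact Finset.sum_comm

lemma avg {V : Type} {s : Finset V} (hs : s.Nonempty) (f : V → ℕ) (t : ℝ)
    (h : t * s.card ≤ ∑ v ∈ s, (f v : ℝ)) : ∃ v ∈ s, t ≤ (f v : ℝ) := by
  by_contra h'
  push_neg at h'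
  have h2 : ∑ v ∈ s, (f v : ℝ) < ∑ _v ∈ s, t := Finset.sum_lt_sum_of_nonempty hs h'
  rw [Finset.sum_const, nsmul_eq_mul] at h2
  nlinarith

theorem stmt_1 (x y : ℝ) (hx : x ∈ Set.Ioc (0:ℝ) 1) (hy : y ∈ Set.Ioc (0:ℝ) 1)
    {V : Type} [Fintype V] (G : SimpleGraph V) (A B C : Set V)
    (hG : Constrained G x y A B C) :
    ∃ v ∈ C, max x y * A.ncard ≤ (n2card G v A : ℝ) := by
  classical
  obtain ⟨⟨hA, hB, hC, hdAB, hdAC, hdBC, hcov, hsA, hsB, hsC⟩, hxB, hyC, hnoAC⟩ := hG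
  obtain ⟨hx0, hx1⟩ := hx
  obtain ⟨hy0, hy1⟩ := hy
  have hAfin := A.toFinite
  have hBfin := B.toFinite
  have hCfin := C.toFinite
  set A' := hAfin.toFinset with hA'
  set B' := hBfin.toFinset with hB'
  set C' := hCfin.toFinset with hC'
  have hAcard : A.ncard = A'.card := Set.ncard_eq_toFinset_card A hAfin
  have hBcard : B.ncard = B'.card := Set.ncard_eq_toFinset_card B hBfin
  have hCcard : C.ncard = C'.card := Set.ncard_eq_toFinset_card C hCfin
  have hApos : 0 < A.ncard := (Set.ncard_pos hAfin).mpr hA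
  have hBpos : 0 < B.ncard := (Set.ncard_pos hBfin).mpr hB
  have hCpos : 0 < C.ncard := (Set.ncard_pos hCfin).mpr hC
  -- key: second neighbours
  have key : ∀ v ∈ C, ∀ b, G.Adj v b → ∀ a ∈ A, G.Adj b a → a ∈ N2 G v := by
    intro v hv b hvb a ha hba
    refine ⟨fun hadj => hnoAC a ha v hv (G.adj_symm hadj), ?_, b, hvb, hba⟩
    intro hva
    exact Set.disjoint_left.mp hdAC ha (hva ▸ hv)
  -- nbrCard via filters
  have nbr_eq : ∀ (w : V) (S : Set V) (hS : S.Finite),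
      nbrCard G w S = (hS.toFinset.filter (fun u => G.Adj w u)).card := by
    intro w S hS
    have hset : (S ∩ G.neighborSet w) = {u ∈ S | G.Adj w u} := rfl
    rw [nbrCard, hset, ncard_sep_eq_filter]
  have n2_eq : ∀ v : V, n2card G v A = (A'.filter (fun a => a ∈ N2 G v)).card := by
    intro v
    have hset : (N2 G v ∩ A) = {a ∈ A | a ∈ N2 G v} := by
      ext a; constructor
      · rintro ⟨h1, h2⟩; exact ⟨h2, h1⟩
      · rintro ⟨h1, h2⟩; exact ⟨h2, h1⟩
    rw [n2card, hset, ncard_sep_eq_filter]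
  rcases le_total y x with hxy | hxy
  · -- case max = x
    rw [max_eq_left hxy]
    -- double counting A-B edges
    have hdc : ∑ a ∈ A', (B'.filter (fun b => G.Adj a b)).card
        = ∑ b ∈ B', (A'.filter (fun a => G.Adj a b)).card := double_count A' B' _
    have hsum : (x * A.ncard) * B'.card ≤ ∑ b ∈ B', (nbrCard G b A : ℝ) := by
      have h1 : ∀ a ∈ A', x * B.ncard ≤ ((B'.filter (fun b => G.Adj a b)).card : ℝ) := by
        intro a ha
        rw [← nbr_eq a B hBfin]
        exact hxB a (hAfin.mem_toFinset.mp ha)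
      have h2 : (A'.card : ℝ) * (x * B.ncard) ≤ ∑ a ∈ A', ((B'.filter (fun b => G.Adj a b)).card : ℝ) := by
        calc (A'.card : ℝ) * (x * B.ncard) = ∑ _a ∈ A', x * B.ncard := by
              rw [Finset.sum_const, nsmul_eq_mul]
          _ ≤ _ := Finset.sum_le_sum h1
      have hnat : ∑ b ∈ B', nbrCard G b A
          = ∑ a ∈ A', (B'.filter (fun b => G.Adj a b)).card := by
        rw [hdc]
        apply Finset.sum_congr rfl
        intro b _
        rw [nbr_eq b A hAfin]
        congr 1
        apply Finset.filter_congr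
        intro a _
        simp [SimpleGraph.adj_comm]
      have h3 : ∑ b ∈ B', (nbrCard G b A : ℝ)
          = ∑ a ∈ A', ((B'.filter (fun b => G.Adj a b)).card : ℝ) := by
        exact_mod_cast hnat
      rw [h3]
      calc (x * A.ncard) * B'.card = (A'.card : ℝ) * (x * B.ncard) := by
            rw [hAcard, hBcard]; ring
        _ ≤ _ := h2
    obtain ⟨b, hbB', hb⟩ := avg (hBfin.toFinset_nonempty.mpr hB) _ _ hsum
    have hbB : b ∈ B := hBfin.mem_toFinset.mp hbB'
    -- b has a neighbour in C
    have hnbC : 0 < (nbrCard G b C : ℝ) :=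
      lt_of_lt_of_le (by positivity) (hyC b hbB)
    have hne : (C ∩ G.neighborSet b).Nonempty := by
      rw [← Set.ncard_pos ((C ∩ G.neighborSet b).toFinite)]
      exact_mod_cast hnbC
    obtain ⟨v, hvC, hvN⟩ := hne
    refine ⟨v, hvC, ?_⟩
    have hsub : (A ∩ G.neighborSet b) ⊆ (N2 G v ∩ A) := by
      rintro a ⟨ha, hba⟩
      exact ⟨key v hvC b (G.adj_symm hvN) a ha hba, ha⟩
    have hle : nbrCard G b A ≤ n2card G v A :=
      Set.ncard_le_ncard hsub ((N2 G v ∩ A).toFinite)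
    calc x * A.ncard ≤ (nbrCard G b A : ℝ) := hb
      _ ≤ (n2card G v A : ℝ) := by exact_mod_cast hle
  · -- case max = y
    rw [max_eq_right hxy]
    have hm : ∀ a ∈ A', y * C.ncard ≤ ((C'.filter (fun v => a ∈ N2 G v)).card : ℝ) := by
      intro a ha'
      have ha : a ∈ A := hAfin.mem_toFinset.mp ha'
      -- a has a neighbour b in B
      have hnbB : 0 < (nbrCard G a B : ℝ) :=
        lt_of_lt_of_le (by positivity) (hxB a ha)
      have hne : (B ∩ G.neighborSet a).Nonempty := by
        rw [← Set.ncard_pos ((B ∩ G.neighborSet a).toFinite)]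
        exact_mod_cast hnbB
      obtain ⟨b, hbB, hbN⟩ := hne
      have hsub : (C'.filter (fun v => G.Adj b v)) ⊆ (C'.filter (fun v => a ∈ N2 G v)) := by
        intro v hv
        rw [Finset.mem_filter] at hv ⊢
        obtain ⟨hvC', hbv⟩ := hv
        exact ⟨hvC', key v (hCfin.mem_toFinset.mp hvC') b (G.adj_symm hbv) a ha (G.adj_symm hbN)⟩
      calc y * C.ncard ≤ (nbrCard G b C : ℝ) := hyC b hbB
        _ = ((C'.filter (fun v => G.Adj b v)).card : ℝ) := by rw [nbr_eq b C hCfin]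
        _ ≤ _ := by exact_mod_cast Finset.card_le_card hsub
    have hsum : (y * A.ncard) * C'.card ≤ ∑ v ∈ C', (n2card G v A : ℝ) := by
      have hdc : ∑ v ∈ C', (A'.filter (fun a => a ∈ N2 G v)).card
          = ∑ a ∈ A', (C'.filter (fun v => a ∈ N2 G v)).card :=
        double_count C' A' (fun v a => a ∈ N2 G v)
      have h2 : (A'.card : ℝ) * (y * C.ncard) ≤ ∑ a ∈ A', ((C'.filter (fun v => a ∈ N2 G v)).card : ℝ) := by
        calc (A'.card : ℝ) * (y * C.ncard) = ∑ _a ∈ A', y * C.ncard := by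
              rw [Finset.sum_const, nsmul_eq_mul]
          _ ≤ _ := Finset.sum_le_sum hm
      have hnat : ∑ v ∈ C', n2card G v A = ∑ a ∈ A', (C'.filter (fun v => a ∈ N2 G v)).card := by
        rw [← hdc]
        exact Finset.sum_congr rfl fun v _ => n2_eq v
      have h3 : ∑ v ∈ C', (n2card G v A : ℝ) = ∑ a ∈ A', ((C'.filter (fun v => a ∈ N2 G v)).card : ℝ) := by
        exact_mod_cast hnat
      rw [h3]
      calc (y * A.ncard) * C'.card = (A'.card : ℝ) * (y * C.ncard) := by
            rw [hAcard, hCcard]; ring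
        _ ≤ _ := h2
    obtain ⟨v, hvC', hv⟩ := avg (hCfin.toFinset_nonempty.mpr hC) _ _ hsum
    exact ⟨v, hCfin.mem_toFinset.mp hvC', hv⟩
end

section
/- For every integer k ≥ 1 and all x, y ∈ (0,1], there exists a graph G that is (x,y)-constrained via a tripartition (A,B,C) with |A| = |B| = |C| = k, such that |N²_A(v)| ≤ ⌈kx⌉ + ⌈ky⌉ − 1 for every vertex v ∈ C. -/
open Set

def trel (k a b : ℕ) : (ZMod k ⊕ ZMod k ⊕ ZMod k) → (ZMod k ⊕ ZMod k ⊕ ZMod k) → Prop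
  | Sum.inl i, Sum.inr (Sum.inl j) => (j - i).val < a
  | Sum.inr (Sum.inl j), Sum.inr (Sum.inr l) => (l - j).val < b
  | _, _ => False

lemma card_val_lt (k m : ℕ) [NeZero k] : {d : ZMod k | d.val < m}.ncard = min m k := by
  have e : {d : ZMod k | d.val < m} ≃ Fin (min m k) :=
    { toFun := fun d => ⟨d.1.val, lt_min d.2 d.1.val_lt⟩
      invFun := fun t => ⟨((t : ℕ) : ZMod k), by
        simpa [ZMod.val_natCast_of_lt (lt_of_lt_of_le t.2 (min_le_right m k))] using
          lt_of_lt_of_le t.2 (min_le_left m k)⟩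
      left_inv := fun d => Subtype.ext (ZMod.natCast_rightInverse d.1)
      right_inv := fun t => by
        ext
        exact ZMod.val_natCast_of_lt (lt_of_lt_of_le t.2 (min_le_right m k)) }
  rw [← Nat.card_coe_set_eq, Nat.card_congr e, Nat.card_eq_fintype_card, Fintype.card_fin]

lemma card_sub_val_lt (k m : ℕ) [NeZero k] (l : ZMod k) :
    {i : ZMod k | (l - i).val < m}.ncard = min m k := by
  have h : {i : ZMod k | (l - i).val < m} = (fun d => l - d) '' {d : ZMod k | d.val < m} := by
    ext i
    constructor
    · intro hi
      exact ⟨l - i, hi, by ring⟩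
    · rintro ⟨d, hd, rfl⟩
      simpa using hd
  rw [h, Set.ncard_image_of_injective _
    (fun u v h => by have := sub_right_injective h; simpa using this), card_val_lt]

lemma card_sub_val_lt' (k m : ℕ) [NeZero k] (c : ZMod k) :
    {j : ZMod k | (j - c).val < m}.ncard = min m k := by
  have h : {j : ZMod k | (j - c).val < m} = (fun d => d + c) '' {d : ZMod k | d.val < m} := by
    ext j
    constructor
    · intro hj
      exact ⟨j - c, hj, by ring⟩
    · rintro ⟨d, hd, rfl⟩
      simpa using hd
  rw [h, Set.ncard_image_of_injective _ (add_left_injective c), card_val_lt]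

theorem stmt_2 (k : ℕ) (hk : 1 ≤ k) (x y : ℝ)
    (hx : x ∈ Set.Ioc (0:ℝ) 1) (hy : y ∈ Set.Ioc (0:ℝ) 1) :
    ∃ (V : Type) (_ : Fintype V) (G : SimpleGraph V) (A B C : Set V),
      Constrained G x y A B C ∧ A.ncard = k ∧ B.ncard = k ∧ C.ncard = k ∧
      ∀ v ∈ C, (n2card G v A : ℤ) ≤ ⌈(k : ℝ) * x⌉ + ⌈(k : ℝ) * y⌉ - 1 := by
  have : NeZero k := ⟨by omega⟩
  obtain ⟨hx0, hx1⟩ := hx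
  obtain ⟨hy0, hy1⟩ := hy
  set a : ℕ := (⌈(k : ℝ) * x⌉).toNat with ha_def
  set b : ℕ := (⌈(k : ℝ) * y⌉).toNat with hb_def
  have hkpos : (0:ℝ) < k := by positivity
  have hcx : (1:ℤ) ≤ ⌈(k : ℝ) * x⌉ := by
    apply Int.ceil_pos.mpr; positivity
  have hcy : (1:ℤ) ≤ ⌈(k : ℝ) * y⌉ := by
    apply Int.ceil_pos.mpr; positivity
  have hax : (a : ℤ) = ⌈(k : ℝ) * x⌉ := Int.toNat_of_nonneg (by omega)
  have hbx : (b : ℤ) = ⌈(k : ℝ) * y⌉ := Int.toNat_of_nonneg (by omega)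
  have ha1 : 1 ≤ a := by omega
  have hb1 : 1 ≤ b := by omega
  have hak : a ≤ k := by
    have : (⌈(k : ℝ) * x⌉ : ℤ) ≤ k := by
      apply Int.ceil_le.mpr
      push_cast
      nlinarith
    omega
  have hbk : b ≤ k := by
    have : (⌈(k : ℝ) * y⌉ : ℤ) ≤ k := by
      apply Int.ceil_le.mpr
      push_cast
      nlinarith
    omega
  classical
  refine ⟨ZMod k ⊕ ZMod k ⊕ ZMod k, inferInstance, SimpleGraph.fromRel (trel k a b),
    Set.range Sum.inl, Set.range (Sum.inr ∘ Sum.inl), Set.range (Sum.inr ∘ Sum.inr), ?_⟩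
  have hcard : ∀ (f : ZMod k → ZMod k ⊕ ZMod k ⊕ ZMod k), Function.Injective f →
      (Set.range f).ncard = k := by
    intro f hf
    rw [← Nat.card_coe_set_eq, Nat.card_range_of_injective hf, Nat.card_zmod]
  set G := SimpleGraph.fromRel (trel k a b) with hG
  have hAB : ∀ i j : ZMod k, G.Adj (Sum.inl i) (Sum.inr (Sum.inl j)) ↔ (j - i).val < a := by
    intro i j
    rw [hG, SimpleGraph.fromRel_adj]
    constructor
    · rintro ⟨-, h | h⟩
      · exact h
      · exact h.elim
    · intro h
      exact ⟨by simp, Or.inl h⟩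
  have hBC : ∀ j l : ZMod k, G.Adj (Sum.inr (Sum.inl j)) (Sum.inr (Sum.inr l)) ↔
      (l - j).val < b := by
    intro j l
    rw [hG, SimpleGraph.fromRel_adj]
    constructor
    · rintro ⟨-, h | h⟩
      · exact h
      · exact h.elim
    · intro h
      exact ⟨by simp, Or.inl h⟩
  have hnAC : ∀ i l : ZMod k, ¬ G.Adj (Sum.inl i) (Sum.inr (Sum.inr l)) := by
    intro i l h
    rw [hG, SimpleGraph.fromRel_adj] at h
    exact h.2.elim (fun h => h) (fun h => h)
  refine ⟨?_, ?_, ?_, ?_, ?_⟩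
  · -- Constrained
    refine ⟨⟨⟨Sum.inl 0, 0, rfl⟩, ⟨Sum.inr (Sum.inl 0), 0, rfl⟩, ⟨Sum.inr (Sum.inr 0), 0, rfl⟩,
        ?_, ?_, ?_, ?_, ?_, ?_, ?_⟩, ?_, ?_, ?_⟩
    · rw [Set.disjoint_left]
      rintro _ ⟨i, rfl⟩ ⟨j, h⟩
      simp at h
    · rw [Set.disjoint_left]
      rintro _ ⟨i, rfl⟩ ⟨j, h⟩
      simp at h
    · rw [Set.disjoint_left]
      rintro _ ⟨i, rfl⟩ ⟨j, h⟩
      simp at h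
    · ext u
      rcases u with i | j | l <;> simp
    · rintro _ ⟨i, rfl⟩ _ ⟨j, rfl⟩ h
      rw [hG, SimpleGraph.fromRel_adj] at h
      exact h.2.elim (fun h => h) (fun h => h)
    · rintro _ ⟨i, rfl⟩ _ ⟨j, rfl⟩ h
      rw [hG, SimpleGraph.fromRel_adj] at h
      exact h.2.elim (fun h => h) (fun h => h)
    · rintro _ ⟨i, rfl⟩ _ ⟨j, rfl⟩ h
      rw [hG, SimpleGraph.fromRel_adj] at h
      exact h.2.elim (fun h => h) (fun h => h)
    · -- A degree condition
      rintro _ ⟨i, rfl⟩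
      have hset : Set.range (Sum.inr ∘ Sum.inl) ∩ G.neighborSet (Sum.inl i) =
          (Sum.inr ∘ Sum.inl) '' {j : ZMod k | (j - i).val < a} := by
        ext u
        rcases u with i' | j | l
        · simp
        · simp only [Set.mem_inter_iff, Set.mem_range, Function.comp_apply,
            SimpleGraph.mem_neighborSet, Set.mem_image, Set.mem_setOf_eq, hAB]
          constructor
          · rintro ⟨-, h⟩
            exact ⟨j, h, rfl⟩
          · rintro ⟨j', h, hj⟩
            cases hj
            exact ⟨⟨j, rfl⟩, h⟩
        · simp only [Set.mem_inter_iff, Set.mem_range, Function.comp_apply,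
            SimpleGraph.mem_neighborSet, Set.mem_image, Set.mem_setOf_eq]
          constructor
          · rintro ⟨⟨j, h⟩, -⟩
            simp at h
          · rintro ⟨j', h, hj⟩
            simp at hj
      have hval : nbrCard G (Sum.inl i) (Set.range (Sum.inr ∘ Sum.inl)) = a := by
        rw [nbrCard, hset, Set.ncard_image_of_injective _
          (fun u v h => by simpa using h)]
        rw [card_sub_val_lt' k a i, min_eq_left hak]
      rw [hval, hcard _ (Sum.inr_injective.comp Sum.inl_injective)]
      have h1 : (k : ℝ) * x ≤ (a : ℝ) := by
        have := Int.le_ceil ((k : ℝ) * x)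
        rw [← hax] at this
        exact_mod_cast this
      linarith [h1]
    · -- B degree condition
      rintro _ ⟨j, rfl⟩
      have hset : Set.range (Sum.inr ∘ Sum.inr) ∩ G.neighborSet (Sum.inr (Sum.inl j)) =
          (Sum.inr ∘ Sum.inr) '' {l : ZMod k | (l - j).val < b} := by
        ext u
        rcases u with i' | j' | l
        · simp
        · simp only [Set.mem_inter_iff, Set.mem_range, Function.comp_apply, Set.mem_image]
          constructor
          · rintro ⟨⟨l', h⟩, -⟩
            simp at h
          · rintro ⟨l', h, hl⟩
            simp at hl
        · simp only [Set.mem_inter_iff, Set.mem_range, Function.comp_apply,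
            SimpleGraph.mem_neighborSet, Set.mem_image, Set.mem_setOf_eq]
          constructor
          · rintro ⟨-, h⟩
            exact ⟨l, (hBC j l).mp h, rfl⟩
          · rintro ⟨l', h, hl⟩
            cases hl
            exact ⟨⟨l, rfl⟩, (hBC j l).mpr h⟩
      have hval : nbrCard G (Sum.inr (Sum.inl j)) (Set.range (Sum.inr ∘ Sum.inr)) = b := by
        rw [nbrCard, hset, Set.ncard_image_of_injective _
          (fun u v h => by simpa using h), card_sub_val_lt' k b j, min_eq_left hbk]
      simp only [Function.comp_apply]
      rw [hval, hcard _ (Sum.inr_injective.comp Sum.inr_injective)]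
      have h1 : (k : ℝ) * y ≤ (b : ℝ) := by
        have := Int.le_ceil ((k : ℝ) * y)
        rw [← hbx] at this
        exact_mod_cast this
      linarith [h1]
    · -- no A-C edges
      rintro _ ⟨i, rfl⟩ _ ⟨l, rfl⟩
      exact hnAC i l
  · exact hcard _ Sum.inl_injective
  · exact hcard _ (Sum.inr_injective.comp Sum.inl_injective)
  · exact hcard _ (Sum.inr_injective.comp Sum.inr_injective)
  · rintro _ ⟨l, rfl⟩
    simp only [Function.comp_apply]
    have hsub : N2 G (Sum.inr (Sum.inr l)) ∩ Set.range Sum.inl ⊆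
        Sum.inl '' {i : ZMod k | (l - i).val < a + b - 1} := by
      rintro u ⟨⟨hnadj, hne, w, hw1, hw2⟩, ⟨i, rfl⟩⟩
      rcases w with i' | j | l'
      · rw [hG, SimpleGraph.fromRel_adj] at hw1
        exact (hw1.2.elim (fun h => h) (fun h => h)).elim
      · rw [hG, SimpleGraph.fromRel_adj] at hw1 hw2
        have h1 : (l - j).val < b := hw1.2.elim (fun h => h.elim) (fun h => h)
        have h2 : (j - i).val < a := hw2.2.elim (fun h => h.elim) (fun h => h)
        refine ⟨i, ?_, rfl⟩
        have h3 : l - i = (l - j) + (j - i) := by ring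
        have h4 : (l - i).val ≤ (l - j).val + (j - i).val := by
          rw [h3]; exact ZMod.val_add_le _ _
        simp only [Set.mem_setOf_eq]
        omega
      · rw [hG, SimpleGraph.fromRel_adj] at hw2
        exact (hw2.2.elim (fun h => h) (fun h => h)).elim
    have h5 : n2card G (Sum.inr (Sum.inr l)) (Set.range Sum.inl) ≤ a + b - 1 := by
      rw [n2card]
      calc (N2 G (Sum.inr (Sum.inr l)) ∩ Set.range Sum.inl).ncard
          ≤ (Sum.inl '' {i : ZMod k | (l - i).val < a + b - 1}).ncard :=
            Set.ncard_le_ncard hsub (Set.toFinite _)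
        _ = min (a + b - 1) k := by
            rw [Set.ncard_image_of_injective _ Sum.inl_injective, card_sub_val_lt]
        _ ≤ a + b - 1 := min_le_left _ _
    rw [← hax, ← hbx]
    have h6 : (n2card G (Sum.inr (Sum.inr l)) (Set.range Sum.inl) : ℤ) ≤ (a : ℤ) + b - 1 := by
      omega
    exact h6
end

section
/- Let G be a graph with a bipartition (A,B), where A and B are nonempty, and let w : B → ℝ≥0 be a function with w(B) = 1. Then either (i) there is a function w' : B → ℝ≥0 such that w'(B) = 1, w'(A→B) ≥ w(A→B), and w'(v) = 0 for some v ∈ B; or (ii) there is a function f : A → ℝ≥0 such that f(A) = 1 and f(B→A) ≥ w(A→B). -/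
open Set

/-- The weight of a set of vertices. -/
noncomputable def wsum {V : Type*} (w : V → ℝ) (S : Set V) : ℝ := ∑ᶠ v ∈ S, w v

/-- A bipartition of a graph `G` is a partition of its vertex set into two stable sets. -/
def IsBipartition {V : Type*} (G : SimpleGraph V) (A B : Set V) : Prop :=
  Disjoint A B ∧ A ∪ B = Set.univ ∧ StableSet G A ∧ StableSet G B

/-- `w(A → B)`: the minimum over `u ∈ A` of the `w`-weight of `N(u) ∩ B`
(`0` if `A` is empty, which is the convention of `Real.sInf`). -/
noncomputable def arrowMin {V : Type*} (G : SimpleGraph V) (w : V → ℝ) (A B : Set V) : ℝ :=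
  sInf ((fun u => wsum w (G.neighborSet u ∩ B)) '' A)

open scoped Classical

lemma wsum_eq_sum {V : Type} [Fintype V] (w : V → ℝ) (S : Set V) :
    wsum w S = ∑ v ∈ S.toFinset, w v := by
  rw [wsum, ← finsum_mem_coe_finset w S.toFinset, Set.coe_toFinset]

lemma arrowMin_le' {V : Type} [Fintype V] (G : SimpleGraph V) (w : V → ℝ) {A : Set V}
    (B : Set V) {u : V} (hu : u ∈ A) :
    arrowMin G w A B ≤ wsum w (G.neighborSet u ∩ B) :=
  csInf_le ((A.toFinite.image _).bddBelow) ⟨u, hu, rfl⟩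

lemma le_arrowMin' {V : Type} [Fintype V] (G : SimpleGraph V) (w : V → ℝ) {A : Set V}
    (B : Set V) (hA : A.Nonempty) {c : ℝ}
    (h : ∀ u ∈ A, c ≤ wsum w (G.neighborSet u ∩ B)) : c ≤ arrowMin G w A B :=
  le_csInf (hA.image _) (by rintro _ ⟨u, hu, rfl⟩; exact h u hu)

/-- the linear map sending f to (v ↦ f(N(v) ∩ A)) -/
noncomputable def nbrSumMap {V : Type} [Fintype V] (G : SimpleGraph V) (A : Set V) :
    (V → ℝ) →ₗ[ℝ] (V → ℝ) where
  toFun f := fun v => ∑ u ∈ (G.neighborSet v ∩ A).toFinset, f u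
  map_add' f g := by funext v; simp [Finset.sum_add_distrib]
  map_smul' c f := by funext v; simp [Finset.mul_sum]

lemma combine {V : Type} [Fintype V] (G : SimpleGraph V) (A B : Set V)
    (hA : A.Nonempty) (w μ : V → ℝ) (hw : ∀ v, 0 ≤ w v) (hw1 : wsum w B = 1)
    (hμnn : ∀ v, 0 ≤ μ v) (hμ0 : ∀ v, v ∉ B → μ v = 0) (hμsum : wsum μ B = 1)
    (hμlt : ∀ u ∈ A, wsum μ (G.neighborSet u ∩ B) < arrowMin G w A B) :
    ∃ w' : V → ℝ, (∀ v, 0 ≤ w' v) ∧ wsum w' B = 1 ∧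
        arrowMin G w A B ≤ arrowMin G w' A B ∧ ∃ v ∈ B, w' v = 0 := by
  classical
  set t := arrowMin G w A B with ht
  have hwB : ∑ v ∈ B.toFinset, w v = 1 := by rw [← wsum_eq_sum, hw1]
  have hμB : ∑ v ∈ B.toFinset, μ v = 1 := by rw [← wsum_eq_sum, hμsum]
  have hTne : ∃ v ∈ B.toFinset, w v < μ v := by
    by_contra hcon
    push_neg at hcon
    have hsum : ∑ v ∈ B.toFinset, (w v - μ v) = 0 := by
      rw [Finset.sum_sub_distrib, hwB, hμB]; ring
    have hzero : ∀ v ∈ B.toFinset, w v - μ v = 0 :=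
      (Finset.sum_eq_zero_iff_of_nonneg (fun v hv => sub_nonneg.2 (hcon v hv))).1 hsum
    obtain ⟨u0, hu0⟩ := hA
    have h1 : t ≤ wsum w (G.neighborSet u0 ∩ B) := arrowMin_le' G w B hu0
    have h2 : wsum μ (G.neighborSet u0 ∩ B) = wsum w (G.neighborSet u0 ∩ B) := by
      rw [wsum_eq_sum, wsum_eq_sum]
      refine Finset.sum_congr rfl fun v hv => ?_
      have hvB : v ∈ B.toFinset := by
        simp only [Set.mem_toFinset, Set.mem_inter_iff] at hv ⊢
        exact hv.2
      have := hzero v hvB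
      linarith
    have := hμlt u0 hu0
    linarith
  set T := B.toFinset.filter (fun v => w v < μ v) with hT
  have hTne' : T.Nonempty := by
    obtain ⟨v, hv1, hv2⟩ := hTne
    exact ⟨v, Finset.mem_filter.2 ⟨hv1, hv2⟩⟩
  set s := T.inf' hTne' (fun v => w v / (μ v - w v)) with hs
  have hs0 : 0 ≤ s := by
    refine Finset.le_inf' _ _ fun v hv => ?_
    have := (Finset.mem_filter.1 hv).2
    exact div_nonneg (hw v) (by linarith)
  obtain ⟨v0, hv0T, hv0⟩ := Finset.exists_mem_eq_inf' hTne' (fun v => w v / (μ v - w v))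
  have hv0B : v0 ∈ B := by
    have := (Finset.mem_filter.1 hv0T).1
    simpa [Set.mem_toFinset] using this
  have hv0lt : w v0 < μ v0 := (Finset.mem_filter.1 hv0T).2
  refine ⟨fun v => w v + s * (w v - μ v), ?_, ?_, ?_, ⟨v0, hv0B, ?_⟩⟩
  · intro v
    dsimp only
    by_cases hvT : v ∈ T
    · have hlt : w v < μ v := (Finset.mem_filter.1 hvT).2
      have hle : s ≤ w v / (μ v - w v) := Finset.inf'_le _ hvT
      have hd : 0 < μ v - w v := by linarith
      have h3 : s * (μ v - w v) ≤ w v := (le_div_iff₀ hd).1 hle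
      nlinarith
    · have hge : μ v ≤ w v := by
        by_cases hvB : v ∈ B
        · by_contra hcon
          push_neg at hcon
          exact hvT (Finset.mem_filter.2 ⟨Set.mem_toFinset.2 hvB, hcon⟩)
        · rw [hμ0 v hvB]; exact hw v
      have := mul_nonneg hs0 (sub_nonneg.2 hge)
      have := hw v
      linarith
  · rw [wsum_eq_sum, Finset.sum_add_distrib, ← Finset.mul_sum, Finset.sum_sub_distrib,
      hwB, hμB]
    ring
  · refine le_arrowMin' G _ B hA fun u hu => ?_
    have hW : t ≤ wsum w (G.neighborSet u ∩ B) := arrowMin_le' G w B hu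
    have hM : wsum μ (G.neighborSet u ∩ B) < t := hμlt u hu
    have hexp : wsum (fun v => w v + s * (w v - μ v)) (G.neighborSet u ∩ B)
        = wsum w (G.neighborSet u ∩ B)
          + s * (wsum w (G.neighborSet u ∩ B) - wsum μ (G.neighborSet u ∩ B)) := by
      rw [wsum_eq_sum, wsum_eq_sum, wsum_eq_sum, Finset.sum_add_distrib, ← Finset.mul_sum,
        Finset.sum_sub_distrib]
    rw [hexp]
    nlinarith
  · have hd : 0 < μ v0 - w v0 := by linarith
    show w v0 + s * (w v0 - μ v0) = 0
    rw [hs, hv0]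
    field_simp
    ring

lemma nbrSumMap_apply {V : Type} [Fintype V] (G : SimpleGraph V) (A : Set V) (f : V → ℝ)
    (v : V) : nbrSumMap G A f v = ∑ u ∈ (G.neighborSet v ∩ A).toFinset, f u := rfl

lemma nbrSumMap_apply' {V : Type} [Fintype V] (G : SimpleGraph V) (A : Set V) (f : V → ℝ)
    (v : V) : nbrSumMap G A f v = wsum f (G.neighborSet v ∩ A) := by
  rw [nbrSumMap_apply, wsum_eq_sum]
  refine Finset.sum_congr ?_ fun _ _ => rfl
  ext x
  simp [Set.mem_toFinset]

lemma sum_univ_ite_eq_wsum {V : Type} [Fintype V] (g : V → ℝ) (S : Set V)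
    [DecidablePred (· ∈ S)] :
    ∑ v, (if v ∈ S then g v else 0) = wsum g S := by
  rw [wsum_eq_sum]
  have h : ∀ v ∈ Finset.univ, (if v ∈ S then g v else 0) = if v ∈ S.toFinset then g v else 0 :=
    fun v _ => if_congr (Set.mem_toFinset).symm rfl rfl
  rw [Finset.sum_congr rfl h, Finset.sum_ite_mem, Finset.univ_inter]
  refine Finset.sum_congr ?_ fun _ _ => rfl
  ext x
  simp [Set.mem_toFinset]

lemma wsum_mul_left {V : Type} [Fintype V] (c : ℝ) (g : V → ℝ) (S : Set V) :
    wsum (fun v => c * g v) S = c * wsum g S := by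
  rw [wsum_eq_sum, wsum_eq_sum, Finset.mul_sum]

lemma wsum_div {V : Type} [Fintype V] (c : ℝ) (g : V → ℝ) (S : Set V) :
    wsum (fun v => g v / c) S = wsum g S / c := by
  rw [wsum_eq_sum, wsum_eq_sum, Finset.sum_div]

lemma wsum_congr {V : Type} [Fintype V] {f g : V → ℝ} {S : Set V}
    (h : ∀ v ∈ S, f v = g v) : wsum f S = wsum g S := by
  rw [wsum_eq_sum, wsum_eq_sum]
  exact Finset.sum_congr rfl fun v hv => h v (Set.mem_toFinset.1 hv)

lemma wsum_nonneg {V : Type} [Fintype V] {g : V → ℝ} (hg : ∀ v, 0 ≤ g v) (S : Set V) :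
    0 ≤ wsum g S := by
  rw [wsum_eq_sum]
  exact Finset.sum_nonneg fun v _ => hg v

theorem stmt_4 {V : Type} [Fintype V] (G : SimpleGraph V) (A B : Set V)
    (hbip : IsBipartition G A B) (hA : A.Nonempty) (hB : B.Nonempty)
    (w : V → ℝ) (hw : ∀ v, 0 ≤ w v) (hw1 : wsum w B = 1) :
    (∃ w' : V → ℝ, (∀ v, 0 ≤ w' v) ∧ wsum w' B = 1 ∧
        arrowMin G w A B ≤ arrowMin G w' A B ∧ ∃ v ∈ B, w' v = 0) ∨
    (∃ f : V → ℝ, (∀ v, 0 ≤ f v) ∧ wsum f A = 1 ∧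
        arrowMin G w A B ≤ arrowMin G f B A) := by
  classical
  obtain ⟨hdisj, huniv, hstabA, hstabB⟩ := hbip
  set t := arrowMin G w A B with ht
  have hadj : ∀ u ∈ A, ∀ v : V, G.Adj v u ↔ (G.Adj u v ∧ v ∈ B) := by
    intro u hu v
    constructor
    · intro h
      refine ⟨h.symm, ?_⟩
      have hv : v ∈ A ∪ B := huniv ▸ Set.mem_univ v
      rcases hv with hv | hv
      · exact absurd h.symm (hstabA u hu v hv)
      · exact hv
    · exact fun h => h.1.symm
  -- trivial case t ≤ 0
  by_cases ht0 : t ≤ 0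
  · right
    obtain ⟨a0, ha0⟩ := hA
    refine ⟨fun v => if a0 = v then 1 else 0, fun v => by dsimp only; split <;> norm_num, ?_, ?_⟩
    · rw [wsum_eq_sum, Finset.sum_ite_eq]
      simp [ha0]
    · refine le_trans ht0 (le_arrowMin' G _ A hB fun v hv => ?_)
      rw [wsum_eq_sum]
      refine Finset.sum_nonneg fun u _ => ?_
      split <;> norm_num
  push_neg at ht0
  -- dual feasibility
  by_cases hdual : ∃ f : V → ℝ, (∀ v, 0 ≤ f v) ∧ wsum f A = 1 ∧
      ∀ v ∈ B, t ≤ wsum f (G.neighborSet v ∩ A)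
  · right
    obtain ⟨f, hf0, hfA, hfB⟩ := hdual
    exact ⟨f, hf0, hfA, le_arrowMin' G f A hB hfB⟩
  -- separation
  left
  set S : Set (V → ℝ) := stdSimplex ℝ V ∩ {f | ∀ v, v ∉ A → f v = 0} with hSdef
  set L : (V → ℝ) →ₗ[ℝ] (V → ℝ) := nbrSumMap G A with hLdef
  set Q : Set (V → ℝ) := {x | ∀ v ∈ B, t ≤ x v} with hQdef
  have hZc : IsClosed {f : V → ℝ | ∀ v, v ∉ A → f v = 0} := by
    have heq : {f : V → ℝ | ∀ v, v ∉ A → f v = 0} = ⋂ v, {f : V → ℝ | v ∉ A → f v = 0} := by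
      ext f; simp [Set.mem_iInter]
    rw [heq]
    refine isClosed_iInter fun v => ?_
    by_cases hv : v ∈ A
    · convert isClosed_univ
      ext f; simp [hv]
    · have heq2 : {f : V → ℝ | v ∉ A → f v = 0} = (fun f : V → ℝ => f v) ⁻¹' {0} := by
        ext f; simp [hv]
      rw [heq2]
      exact isClosed_singleton.preimage (continuous_apply v)
  have hScomp : IsCompact S := (isCompact_stdSimplex ℝ V).inter_right hZc
  have hSconv : Convex ℝ S := by
    refine (convex_stdSimplex ℝ V).inter ?_
    intro x hx y hy a b _ _ _ v hv
    simp [Pi.add_apply, hx v hv, hy v hv]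
  have hKcomp : IsCompact (⇑L '' S) := hScomp.image L.continuous_of_finiteDimensional
  have hKconv : Convex ℝ (⇑L '' S) := hSconv.linear_image L
  have hQclosed : IsClosed Q := by
    have heq : Q = ⋂ v, {x : V → ℝ | v ∈ B → t ≤ x v} := by
      ext x; simp [hQdef, Set.mem_iInter]
    rw [heq]
    refine isClosed_iInter fun v => ?_
    by_cases hv : v ∈ B
    · have heq2 : {x : V → ℝ | v ∈ B → t ≤ x v} = (fun x : V → ℝ => x v) ⁻¹' (Set.Ici t) := by
        ext x; simp [hv]
      rw [heq2]
      exact isClosed_Ici.preimage (continuous_apply v)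
    · convert isClosed_univ
      ext x; simp [hv]
  have hQconv : Convex ℝ Q := by
    intro x hx y hy a b ha hb hab v hv
    have h1 := mul_le_mul_of_nonneg_left (hx v hv) ha
    have h2 := mul_le_mul_of_nonneg_left (hy v hv) hb
    have : (a • x + b • y) v = a * x v + b * y v := by simp
    rw [this]
    nlinarith
  have hdisjKQ : Disjoint (⇑L '' S) Q := by
    rw [Set.disjoint_left]
    rintro x ⟨f, ⟨⟨hf1, hf2⟩, hfsupp⟩, rfl⟩ hxQ
    refine hdual ⟨f, hf1, ?_, fun v hv => ?_⟩
    · rw [wsum_eq_sum, Finset.sum_subset (Finset.subset_univ A.toFinset)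
        (fun x _ hx => hfsupp x (by simpa [Set.mem_toFinset] using hx))]
      exact hf2
    · rw [← nbrSumMap_apply']
      exact hxQ v hv
  obtain ⟨φ, c1, c2, hK1, hc12, hQ2⟩ :=
    geometric_hahn_banach_compact_closed hKconv hKcomp hQconv hQclosed hdisjKQ
  set e : V → V → ℝ := fun u j => if u = j then 1 else 0 with he
  set y : V → ℝ := fun v => φ (e v) with hy
  have hrep : ∀ x : V → ℝ, φ x = ∑ v, x v * y v := by
    intro x
    have hx := pi_eq_sum_univ x
    calc φ x = φ (∑ i, x i • fun j => if i = j then (1:ℝ) else 0) := by rw [← hx]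
    _ = ∑ i, x i * y i := by
        rw [map_sum]
        refine Finset.sum_congr rfl fun i _ => ?_
        rw [map_smul]
        rfl
  -- y is nonnegative
  set q0 : V → ℝ := fun v => if v ∈ B then t else 0 with hq0
  have hq0Q : q0 ∈ Q := fun v hv => by simp [hq0, hv]
  have hynn : ∀ v, 0 ≤ y v := by
    intro v
    by_contra hneg
    push_neg at hneg
    set r : ℝ := max 0 ((φ q0 - c2) / (-y v)) with hr
    have hr0 : 0 ≤ r := le_max_left _ _
    have hmem : q0 + r • e v ∈ Q := by
      intro u hu
      have : (q0 + r • e v) u = q0 u + r * (if v = u then 1 else 0) := by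
        simp [he]
      rw [this]
      simp only [hq0, hu, if_pos]
      split <;> nlinarith
    have hval : φ (q0 + r • e v) = φ q0 + r * y v := by
      rw [map_add, map_smul]; rfl
    have hge : (φ q0 - c2) / (-y v) ≤ r := le_max_right _ _
    have hkey : r * y v ≤ c2 - φ q0 := by
      have h1 : r * y v ≤ ((φ q0 - c2) / (-y v)) * y v :=
        mul_le_mul_of_nonpos_right hge hneg.le
      have hyne : y v ≠ 0 := hneg.ne
      have h2 : ((φ q0 - c2) / (-y v)) * y v = c2 - φ q0 := by
        rw [div_mul_eq_mul_div, div_eq_iff (neg_ne_zero.2 hyne)]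
        ring
      linarith
    have := hQ2 _ hmem
    rw [hval] at this
    linarith
  -- key inequality for u ∈ A
  have heS : ∀ u ∈ A, e u ∈ S := by
    intro u hu
    refine ⟨⟨fun x => ?_, ?_⟩, fun v hv => ?_⟩
    · show (0:ℝ) ≤ if u = x then 1 else 0
      split <;> norm_num
    · show (∑ x, if u = x then (1:ℝ) else 0) = 1
      simp [Finset.sum_ite_eq]
    · show (if u = v then (1:ℝ) else 0) = 0
      exact if_neg (fun h : u = v => hv (h ▸ hu))
  have hLe : ∀ u ∈ A, φ (L (e u)) = wsum y (G.neighborSet u ∩ B) := by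
    intro u hu
    rw [hrep]
    have h1 : ∀ v, (L (e u)) v = if v ∈ G.neighborSet u ∩ B then (1:ℝ) else 0 := by
      intro v
      rw [hLdef]
      have h2 : nbrSumMap G A (e u) v
          = ∑ u' ∈ (G.neighborSet v ∩ A).toFinset, if u = u' then (1:ℝ) else 0 := by
        rw [nbrSumMap_apply]
      rw [h2, Finset.sum_ite_eq]
      by_cases hm : v ∈ G.neighborSet u ∩ B
      · have hpm : u ∈ (G.neighborSet v ∩ A).toFinset := Set.mem_toFinset.2 ⟨hm.1.symm, hu⟩
        rw [if_pos hpm, if_pos hm]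
      · have hnm : u ∉ (G.neighborSet v ∩ A).toFinset := by
          rw [Set.mem_toFinset]
          intro hmem
          have h3 := (hadj u hu v).1 hmem.1
          exact hm ⟨h3.1, h3.2⟩
        rw [if_neg hnm, if_neg hm]
    calc ∑ v, (L (e u)) v * y v
        = ∑ v, (if v ∈ G.neighborSet u ∩ B then y v else 0) := by
          refine Finset.sum_congr rfl fun v _ => ?_
          rw [h1]
          split <;> simp
    _ = wsum y (G.neighborSet u ∩ B) := sum_univ_ite_eq_wsum y _
  set yB : ℝ := wsum y B with hyB
  have hφq0 : φ q0 = t * yB := by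
    rw [hrep]
    calc ∑ v, q0 v * y v = ∑ v, (if v ∈ B then t * y v else 0) := by
          refine Finset.sum_congr rfl fun v _ => ?_
          by_cases hv : v ∈ B <;> simp [hq0, hv]
    _ = wsum (fun v => t * y v) B := sum_univ_ite_eq_wsum _ B
    _ = t * yB := wsum_mul_left t y B
  have hc2q0 : c2 < t * yB := hφq0 ▸ hQ2 q0 hq0Q
  have hsu : ∀ u ∈ A, wsum y (G.neighborSet u ∩ B) < c1 := by
    intro u hu
    rw [← hLe u hu]
    exact hK1 _ ⟨e u, heS u hu, rfl⟩
  have hyBpos : 0 < yB := by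
    obtain ⟨u0, hu0⟩ := hA
    have h1 : (0:ℝ) ≤ wsum y (G.neighborSet u0 ∩ B) := wsum_nonneg hynn _
    have h2 := hsu u0 hu0
    by_contra hcon
    push_neg at hcon
    nlinarith
  -- build μ
  set μ : V → ℝ := fun v => if v ∈ B then y v / yB else 0 with hμ
  have hμnn : ∀ v, 0 ≤ μ v := by
    intro v
    by_cases hv : v ∈ B
    · simp only [hμ, if_pos hv]
      exact div_nonneg (hynn v) hyBpos.le
    · simp [hμ, hv]
  have hμ0 : ∀ v, v ∉ B → μ v = 0 := fun v hv => by simp [hμ, hv]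
  have hμeq : ∀ S : Set V, S ⊆ B → wsum μ S = wsum y S / yB := by
    intro S hSB
    have h1 : wsum μ S = wsum (fun v => y v / yB) S :=
      wsum_congr fun v hv => by simp [hμ, hSB hv]
    rw [h1, wsum_div]
  have hμsum : wsum μ B = 1 := by
    rw [hμeq B le_rfl, div_self hyBpos.ne']
  have hμlt : ∀ u ∈ A, wsum μ (G.neighborSet u ∩ B) < t := by
    intro u hu
    rw [hμeq _ Set.inter_subset_right, div_lt_iff₀ hyBpos]
    have h2 := hsu u hu
    linarith
  exact combine G A B hA w μ hw hw1 hμnn hμ0 hμsum hμlt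
end

section
/- Let k ≥ 0 be an integer, and let x, y ∈ (0,1] with kx < 1 and ky < 1 satisfy x/(1−kx) + y/(1−ky) ≤ 1, with strict inequality if x or y is irrational. Then there exists a graph G that is (x,y)-constrained via a tripartition (A,B,C) such that |N²_A(v)| < |A|/(k+1) for every vertex v ∈ C. (Equivalently, φ(x,y) < 1/(k+1).) -/
open Set

namespace Stmt6

abbrev Blk (k s m t : ℕ) : Type := (Fin k × Fin s) ⊕ (Fin (m+1) × Fin t)

section rels
variable {k sa sb sc m ta tb tc : ℕ}

def relAB (P : ℕ) : Blk k sa m ta → Blk k sb m tb → Prop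
  | Sum.inl (i, _), Sum.inl (i', _) => i = i'
  | Sum.inr (j, _), Sum.inr (t, _) => (j - t).val < P
  | _, _ => False

def relBC (P : ℕ) : Blk k sb m tb → Blk k sc m tc → Prop
  | Sum.inl (i, _), Sum.inl (i', _) => i = i'
  | Sum.inr (t, _), Sum.inr (j, _) => ¬ ((j - t).val < P)
  | _, _ => False

abbrev VV (k m sa ta sb tb sc tc : ℕ) : Type :=
  Blk k sa m ta ⊕ (Blk k sb m tb ⊕ Blk k sc m tc)

def adj (P : ℕ) : VV k m sa ta sb tb sc tc → VV k m sa ta sb tb sc tc → Prop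
  | Sum.inl u, Sum.inr (Sum.inl v) => relAB P u v
  | Sum.inr (Sum.inl v), Sum.inl u => relAB P u v
  | Sum.inr (Sum.inl u), Sum.inr (Sum.inr v) => relBC P u v
  | Sum.inr (Sum.inr v), Sum.inr (Sum.inl u) => relBC P u v
  | _, _ => False

def G (k m sa ta sb tb sc tc P : ℕ) : SimpleGraph (VV k m sa ta sb tb sc tc) where
  Adj := adj P
  symm := by
    constructor
    rintro (u | u | u) (v | v | v) h <;> simp only [adj] at h ⊢ <;> exact h
  loopless := by
    constructor
    rintro (u | u | u) h <;> simp only [adj] at h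

variable {P : ℕ}

@[simp] lemma G_adj {u v : VV k m sa ta sb tb sc tc} :
    (G k m sa ta sb tb sc tc P).Adj u v ↔ adj P u v := Iff.rfl

@[simp] lemma adj_AB {u : Blk k sa m ta} {v : Blk k sb m tb} :
    adj (sa:=sa) (ta:=ta) (sc:=sc) (tc:=tc) P (Sum.inl u) (Sum.inr (Sum.inl v)) ↔ relAB P u v := Iff.rfl
@[simp] lemma adj_BA {u : Blk k sa m ta} {v : Blk k sb m tb} :
    adj (sa:=sa) (ta:=ta) (sc:=sc) (tc:=tc) P (Sum.inr (Sum.inl v)) (Sum.inl u) ↔ relAB P u v := Iff.rfl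
@[simp] lemma adj_BC {u : Blk k sb m tb} {v : Blk k sc m tc} :
    adj (sa:=sa) (ta:=ta) (sc:=sc) (tc:=tc) P (Sum.inr (Sum.inl u)) (Sum.inr (Sum.inr v)) ↔ relBC P u v := Iff.rfl
@[simp] lemma adj_CB {u : Blk k sb m tb} {v : Blk k sc m tc} :
    adj (sa:=sa) (ta:=ta) (sc:=sc) (tc:=tc) P (Sum.inr (Sum.inr v)) (Sum.inr (Sum.inl u)) ↔ relBC P u v := Iff.rfl
@[simp] lemma adj_AA {u v : Blk k sa m ta} :
    ¬ adj (sa:=sa) (ta:=ta) (sb:=sb) (tb:=tb) (sc:=sc) (tc:=tc) P (Sum.inl u) (Sum.inl v) := fun h => h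
@[simp] lemma adj_AC {u : Blk k sa m ta} {v : Blk k sc m tc} :
    ¬ adj (sb:=sb) (tb:=tb) P (Sum.inl u) (Sum.inr (Sum.inr v)) := fun h => h
@[simp] lemma adj_CA {u : Blk k sa m ta} {v : Blk k sc m tc} :
    ¬ adj (sb:=sb) (tb:=tb) P (Sum.inr (Sum.inr v)) (Sum.inl u) := fun h => h
@[simp] lemma adj_BB {u v : Blk k sb m tb} :
    ¬ adj (sa:=sa) (ta:=ta) (sc:=sc) (tc:=tc) P (Sum.inr (Sum.inl u)) (Sum.inr (Sum.inl v)) := fun h => h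
@[simp] lemma adj_CC {u v : Blk k sc m tc} :
    ¬ adj (sa:=sa) (ta:=ta) (sb:=sb) (tb:=tb) P (Sum.inr (Sum.inr u)) (Sum.inr (Sum.inr v)) := fun h => h

@[simp] lemma relAB_hubhub {i i' : Fin k} {s : Fin sa} {s' : Fin sb} :
    relAB (m:=m) (ta:=ta) (tb:=tb) P (Sum.inl (i,s)) (Sum.inl (i',s')) ↔ i = i' := Iff.rfl
@[simp] lemma relAB_cyccyc {j t : Fin (m+1)} {s : Fin ta} {s' : Fin tb} :
    relAB (k:=k) (sa:=sa) (sb:=sb) P (Sum.inr (j,s)) (Sum.inr (t,s')) ↔ (j - t).val < P := Iff.rfl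
@[simp] lemma relAB_hubcyc {i : Fin k} {s : Fin sa} {t : Fin (m+1)} {s' : Fin tb} :
    ¬ relAB (sb:=sb) (ta:=ta) (tb:=tb) P (Sum.inl (i,s)) (Sum.inr (t,s')) := fun h => h
@[simp] lemma relAB_cychub {i : Fin k} {s' : Fin sb} {t : Fin (m+1)} {s : Fin ta} :
    ¬ relAB (sa:=sa) (ta:=ta) (tb:=tb) P (Sum.inr (t,s)) (Sum.inl (i,s')) := fun h => h
@[simp] lemma relBC_hubhub {i i' : Fin k} {s : Fin sb} {s' : Fin sc} :
    relBC (m:=m) (tb:=tb) (tc:=tc) P (Sum.inl (i,s)) (Sum.inl (i',s')) ↔ i = i' := Iff.rfl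
@[simp] lemma relBC_cyccyc {j t : Fin (m+1)} {s : Fin tb} {s' : Fin tc} :
    relBC (k:=k) (sb:=sb) (sc:=sc) P (Sum.inr (t,s)) (Sum.inr (j,s')) ↔ ¬ ((j - t).val < P) := Iff.rfl
@[simp] lemma relBC_hubcyc {i : Fin k} {s : Fin sb} {t : Fin (m+1)} {s' : Fin tc} :
    ¬ relBC (sc:=sc) (tb:=tb) (tc:=tc) P (Sum.inl (i,s)) (Sum.inr (t,s')) := fun h => h
@[simp] lemma relBC_cychub {i : Fin k} {s' : Fin sc} {t : Fin (m+1)} {s : Fin tb} :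
    ¬ relBC (sb:=sb) (tb:=tb) (tc:=tc) P (Sum.inr (t,s)) (Sum.inl (i,s')) := fun h => h

end rels

section main
open Set

lemma interval_set_eq {m P : ℕ} (hP : P ≤ m+1) (j : Fin (m+1)) :
    {t : Fin (m+1) | (j - t).val < P} = Set.range (fun r : Fin P => j - Fin.castLE hP r) := by
  ext t
  constructor
  · intro ht
    exact ⟨⟨(j - t).val, ht⟩, by simp [Fin.ext_iff]⟩
  · rintro ⟨r, rfl⟩
    simp only [Set.mem_setOf_eq, sub_sub_cancel]
    simpa using r.isLt

lemma cointerval_set_eq {m P q : ℕ} (hq : P + q = m + 1) (t : Fin (m+1)) :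
    {j : Fin (m+1) | ¬ ((j - t).val < P)} =
      Set.range (fun r : Fin q => t + Fin.cast hq (Fin.natAdd P r)) := by
  ext j
  simp only [Set.mem_setOf_eq, not_lt, Set.mem_range]
  constructor
  · intro hj
    have hlt : (j - t).val < m + 1 := (j - t).isLt
    refine ⟨⟨(j - t).val - P, by omega⟩, ?_⟩
    have h2 : Fin.cast hq (Fin.natAdd P ⟨(j - t).val - P, by omega⟩) = j - t := by
      simp only [Fin.ext_iff, Fin.coe_cast, Fin.natAdd]
      omega
    rw [h2, add_sub_cancel]
  · rintro ⟨r, rfl⟩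
    rw [add_sub_cancel_left]
    simp [Fin.natAdd]

lemma range_ncard {α β : Type*} [Fintype α] (f : α → β) (hf : Function.Injective f) :
    (Set.range f).ncard = Nat.card α := by
  rw [← Set.image_univ, Set.ncard_image_of_injective _ hf, Set.ncard_univ]

lemma construction (k a c e δ : ℕ) (ha : 1 ≤ a) (hc : 1 ≤ c) (he : 1 ≤ e) (hδ : 1 ≤ δ)
    (key : c * (a + e) ≤ e * δ) (x y : ℝ)
    (hxa : x * ((k+1)*a + e) ≤ a) (hyc : y * (δ + k*c) ≤ c) :
    ∃ (V : Type) (_ : Fintype V) (G : SimpleGraph V) (A B C : Set V),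
      Constrained G x y A B C ∧
      ∀ v ∈ C, (n2card G v A : ℝ) < (A.ncard : ℝ) / (k + 1) := by
  obtain ⟨m, hm⟩ : ∃ m, (a+e)*δ = m + 1 :=
    ⟨(a+e)*δ - 1, by have : 1 ≤ (a+e)*δ := Nat.one_le_iff_ne_zero.mpr (by positivity); omega⟩
  set sa := m*(k+2) with hsa
  set ta := k+2 with hta
  set sb := (m+1)*a with hsb
  set tb := a+e with htb
  set sc := (m+1)*c with hsc
  set tc := δ with htc
  set P := a*δ with hPdef
  set q := e*δ with hqdef
  have hP : P ≤ m+1 := by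
    rw [← hm]; exact Nat.mul_le_mul_right δ (by omega)
  have hq : P + q = m+1 := by rw [← hm]; ring

  set Vt := VV k m sa ta sb tb sc tc with hVt
  set Gg := G k m sa ta sb tb sc tc P with hGg
  set A : Set Vt := Set.range Sum.inl with hA
  set B : Set Vt := Set.range (fun b => Sum.inr (Sum.inl b)) with hB
  set C : Set Vt := Set.range (fun cc => Sum.inr (Sum.inr cc)) with hC
  have hBinj : Function.Injective (fun b : Blk k sb m tb => (Sum.inr (Sum.inl b) : Vt)) :=
    fun _ _ h => Sum.inl_injective (Sum.inr_injective h)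
  have hCinj : Function.Injective (fun cc : Blk k sc m tc => (Sum.inr (Sum.inr cc) : Vt)) :=
    fun _ _ h => Sum.inr_injective (Sum.inr_injective h)
  have cardA : A.ncard = k * sa + (m+1) * ta := by
    rw [hA, range_ncard _ Sum.inl_injective]; simp [Nat.card_eq_fintype_card]
  have cardB : B.ncard = k * sb + (m+1) * tb := by
    rw [hB, range_ncard _ hBinj]; simp [Nat.card_eq_fintype_card]
  have cardC : C.ncard = k * sc + (m+1) * tc := by
    rw [hC, range_ncard _ hCinj]; simp [Nat.card_eq_fintype_card]
  -- neighbour counts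
  have hnbrAhub : ∀ (i : Fin k) (s : Fin sa),
      nbrCard Gg (Sum.inl (Sum.inl (i,s))) B = sb := by
    intro i s
    have hset : B ∩ Gg.neighborSet (Sum.inl (Sum.inl (i,s)))
        = Set.range (fun s' : Fin sb => (Sum.inr (Sum.inl (Sum.inl (i, s'))) : Vt)) := by
      ext w
      constructor
      · rintro ⟨⟨bw, rfl⟩, hadj⟩
        simp only [SimpleGraph.mem_neighborSet, hGg, G_adj] at hadj
        rcases bw with ⟨i', s'⟩ | ⟨t, s'⟩
        · have : i = i' := hadj
          exact ⟨s', by rw [this]⟩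
        · exact False.elim hadj
      · rintro ⟨s', rfl⟩
        refine ⟨⟨Sum.inl (i, s'), rfl⟩, ?_⟩
        simp only [SimpleGraph.mem_neighborSet, hGg, G_adj]
        exact rfl
    rw [nbrCard, hset, range_ncard _ (fun s₁ s₂ h => by
      have := Sum.inr_injective h
      have := Sum.inl_injective this
      have := Sum.inl_injective this
      exact (Prod.ext_iff.mp this).2)]
    simp
  have hnbrAcyc : ∀ (j : Fin (m+1)) (s : Fin ta),
      nbrCard Gg (Sum.inl (Sum.inr (j,s))) B = P * tb := by
    intro j s
    have hset : B ∩ Gg.neighborSet (Sum.inl (Sum.inr (j,s)))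
        = Set.range (fun p : Fin P × Fin tb =>
            (Sum.inr (Sum.inl (Sum.inr (j - Fin.castLE hP p.1, p.2))) : Vt)) := by
      ext w
      constructor
      · rintro ⟨⟨bw, rfl⟩, hadj⟩
        simp only [SimpleGraph.mem_neighborSet, hGg, G_adj] at hadj
        rcases bw with ⟨i', s'⟩ | ⟨t, s'⟩
        · exact False.elim hadj
        · have ht : (j - t).val < P := hadj
          refine ⟨(⟨(j-t).val, ht⟩, s'), ?_⟩
          simp only
          congr 3
          simp [Fin.ext_iff]
      · rintro ⟨⟨r, s'⟩, rfl⟩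
        refine ⟨⟨Sum.inr (j - Fin.castLE hP r, s'), rfl⟩, ?_⟩
        simp only [SimpleGraph.mem_neighborSet, hGg, G_adj]
        show (j - (j - Fin.castLE hP r)).val < P
        rw [sub_sub_cancel]
        simpa using r.isLt
    rw [nbrCard, hset, range_ncard _ (fun p₁ p₂ h => by
      have h1 := Sum.inl_injective (Sum.inr_injective h)
      have h2 := Sum.inr_injective h1
      have h3 := Prod.ext_iff.mp h2
      have h4 : Fin.castLE hP p₁.1 = Fin.castLE hP p₂.1 := sub_right_injective h3.1
      exact Prod.ext (Fin.castLE_injective hP h4) h3.2)]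
    simp
  have hnbrBhub : ∀ (i : Fin k) (s : Fin sb),
      nbrCard Gg (Sum.inr (Sum.inl (Sum.inl (i,s)))) C = sc := by
    intro i s
    have hset : C ∩ Gg.neighborSet (Sum.inr (Sum.inl (Sum.inl (i,s))))
        = Set.range (fun s' : Fin sc => (Sum.inr (Sum.inr (Sum.inl (i, s'))) : Vt)) := by
      ext w
      constructor
      · rintro ⟨⟨cw, rfl⟩, hadj⟩
        simp only [SimpleGraph.mem_neighborSet, hGg, G_adj] at hadj
        rcases cw with ⟨i', s'⟩ | ⟨t, s'⟩
        · have : i = i' := hadj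
          exact ⟨s', by rw [this]⟩
        · exact False.elim hadj
      · rintro ⟨s', rfl⟩
        refine ⟨⟨Sum.inl (i, s'), rfl⟩, ?_⟩
        simp only [SimpleGraph.mem_neighborSet, hGg, G_adj]
        exact rfl
    rw [nbrCard, hset, range_ncard _ (fun s₁ s₂ h => by
      have := Sum.inr_injective (Sum.inr_injective h)
      have := Sum.inl_injective this
      exact (Prod.ext_iff.mp this).2)]
    simp
  have hnbrBcyc : ∀ (t : Fin (m+1)) (s : Fin tb),
      nbrCard Gg (Sum.inr (Sum.inl (Sum.inr (t,s)))) C = q * tc := by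
    intro t s
    have hset : C ∩ Gg.neighborSet (Sum.inr (Sum.inl (Sum.inr (t,s))))
        = Set.range (fun p : Fin q × Fin tc =>
            (Sum.inr (Sum.inr (Sum.inr (t + Fin.cast hq (Fin.natAdd P p.1), p.2))) : Vt)) := by
      ext w
      constructor
      · rintro ⟨⟨cw, rfl⟩, hadj⟩
        simp only [SimpleGraph.mem_neighborSet, hGg, G_adj] at hadj
        rcases cw with ⟨i', s'⟩ | ⟨j, s'⟩
        · exact False.elim hadj
        · have hj : ¬ ((j - t).val < P) := hadj
          have hmem : j ∈ {j : Fin (m+1) | ¬ ((j - t).val < P)} := hj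
          rw [cointerval_set_eq hq t] at hmem
          obtain ⟨r, hr⟩ := hmem
          have hr' : t + Fin.cast hq (Fin.natAdd P r) = j := hr
          exact ⟨(r, s'), by simp only [hr']⟩
      · rintro ⟨⟨r, s'⟩, rfl⟩
        refine ⟨⟨Sum.inr (t + Fin.cast hq (Fin.natAdd P r), s'), rfl⟩, ?_⟩
        simp only [SimpleGraph.mem_neighborSet, hGg, G_adj]
        show ¬ ((t + Fin.cast hq (Fin.natAdd P r) - t).val < P)
        rw [add_sub_cancel_left]
        simp [Fin.natAdd]
    rw [nbrCard, hset, range_ncard _ (fun p₁ p₂ h => by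
      have h1 := Sum.inr_injective (Sum.inr_injective h)
      have h2 := Sum.inr_injective h1
      have h3 := Prod.ext_iff.mp h2
      have h4 := add_left_cancel (a := t) h3.1
      have h5 := (Fin.cast_injective hq) h4
      have h6 := congrArg Fin.val h5
      simp only [Fin.natAdd] at h6
      exact Prod.ext (Fin.ext (by omega)) h3.2)]
    simp
  refine ⟨Vt, inferInstance, Gg, A, B, C, ⟨⟨?_, ?_, ?_, ?_, ?_, ?_, ?_, ?_, ?_, ?_⟩, ?_, ?_, ?_⟩, ?_⟩
  · -- A nonempty
    exact ⟨Sum.inl (Sum.inr (0, 0)), ⟨Sum.inr (0,0), rfl⟩⟩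
  · exact ⟨Sum.inr (Sum.inl (Sum.inr (0, ⟨0, by omega⟩))), ⟨Sum.inr (0, ⟨0, by omega⟩), rfl⟩⟩
  · exact ⟨Sum.inr (Sum.inr (Sum.inr (0, ⟨0, by omega⟩))), ⟨Sum.inr (0, ⟨0, by omega⟩), rfl⟩⟩
  · rw [Set.disjoint_left]
    rintro w ⟨u, rfl⟩ ⟨v, hv⟩
    exact Sum.inl_ne_inr hv.symm
  · rw [Set.disjoint_left]
    rintro w ⟨u, rfl⟩ ⟨v, hv⟩
    exact Sum.inl_ne_inr hv.symm
  · rw [Set.disjoint_left]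
    rintro w ⟨u, rfl⟩ ⟨v, hv⟩
    exact Sum.inl_ne_inr (Sum.inr_injective hv).symm
  · ext w
    rcases w with u | u | u
    · exact ⟨fun _ => trivial, fun _ => Or.inl (Or.inl ⟨u, rfl⟩)⟩
    · exact ⟨fun _ => trivial, fun _ => Or.inl (Or.inr ⟨u, rfl⟩)⟩
    · exact ⟨fun _ => trivial, fun _ => Or.inr ⟨u, rfl⟩⟩
  · rintro w₁ ⟨u₁, rfl⟩ w₂ ⟨u₂, rfl⟩ hadj
    exact hadj
  · rintro w₁ ⟨u₁, rfl⟩ w₂ ⟨u₂, rfl⟩ hadj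
    exact hadj
  · rintro w₁ ⟨u₁, rfl⟩ w₂ ⟨u₂, rfl⟩ hadj
    exact hadj
  · -- x degree condition
    rintro v ⟨u, rfl⟩
    have hcB : (B.ncard : ℝ) = ((m:ℝ)+1) * ((k+1)*a + e) := by
      rw [cardB]
      push_cast [hsb, htb]
      ring
    rcases u with ⟨i, s⟩ | ⟨j, s⟩
    · rw [hnbrAhub i s, hcB, hsb]
      have := mul_le_mul_of_nonneg_left hxa (by positivity : (0:ℝ) ≤ (m:ℝ)+1)
      push_cast
      calc x * (((m:ℝ)+1) * ((k+1)*a + e)) = ((m:ℝ)+1) * (x * ((k+1)*a + e)) := by ring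
      _ ≤ ((m:ℝ)+1) * a := this
    · rw [hnbrAcyc j s, Nat.cast_mul, hcB]
      have h1 : ((m:ℝ)+1) = (a+e) * δ := by
        have := hm
        have : ((a+e)*δ : ℝ) = ((m:ℝ)+1) := by exact_mod_cast congrArg (Nat.cast : ℕ → ℝ) this
        linarith [this]
      have h2 := mul_le_mul_of_nonneg_left hxa (by positivity : (0:ℝ) ≤ ((a:ℝ)+e) * δ)
      rw [h1]
      have h3 : (P * tb : ℝ) = ((a:ℝ)+e) * δ * a := by
        push_cast [hPdef, htb]
        ring
      calc x * (((a:ℝ)+e) * δ * ((k+1)*a + e)) = ((a:ℝ)+e) * δ * (x * ((k+1)*a + e)) := by ring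
      _ ≤ ((a:ℝ)+e) * δ * a := h2
      _ = (P * tb : ℝ) := h3.symm
  · -- y degree condition
    rintro v ⟨u, rfl⟩
    have hcC : (C.ncard : ℝ) = ((m:ℝ)+1) * (δ + k*c) := by
      rw [cardC]
      push_cast [hsc, htc]
      ring
    rcases u with ⟨i, s⟩ | ⟨t, s⟩
    · rw [hnbrBhub i s, hcC, hsc]
      have := mul_le_mul_of_nonneg_left hyc (by positivity : (0:ℝ) ≤ (m:ℝ)+1)
      push_cast
      calc y * (((m:ℝ)+1) * (δ + k*c)) = ((m:ℝ)+1) * (y * (δ + k*c)) := by ring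
      _ ≤ ((m:ℝ)+1) * c := this
    · rw [hnbrBcyc t s, Nat.cast_mul, hcC]
      have h1 : ((m:ℝ)+1) = (a+e) * δ := by
        have : ((a+e)*δ : ℝ) = ((m:ℝ)+1) := by exact_mod_cast congrArg (Nat.cast : ℕ → ℝ) hm
        linarith [this]
      have h2 := mul_le_mul_of_nonneg_left hyc (by positivity : (0:ℝ) ≤ ((a:ℝ)+e) * δ)
      have hkey : ((a:ℝ)+e) * δ * c ≤ (q * tc : ℝ) := by
        have : (c * (a+e) : ℝ) ≤ (e * δ : ℝ) := by exact_mod_cast key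
        have h4 : (q * tc : ℝ) = ((e:ℝ) * δ) * δ := by push_cast [hqdef, htc]; ring
        rw [h4]
        have := mul_le_mul_of_nonneg_right this (by positivity : (0:ℝ) ≤ (δ:ℝ))
        calc ((a:ℝ)+e) * δ * c = ((c:ℝ) * (a+e)) * δ := by ring
        _ ≤ ((e:ℝ) * δ) * δ := this
      rw [h1]
      calc y * (((a:ℝ)+e) * δ * (δ + k*c)) = ((a:ℝ)+e) * δ * (y * (δ + k*c)) := by ring
      _ ≤ ((a:ℝ)+e) * δ * c := h2
      _ ≤ (q * tc : ℝ) := hkey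
  · -- no A-C edges
    rintro w₁ ⟨u₁, rfl⟩ w₂ ⟨u₂, rfl⟩ hadj
    exact hadj
  · -- second neighbourhood bound
    rintro v ⟨u, rfl⟩
    have hcardlt : ((m*(k+2)) * (k+1) : ℕ) < k * sa + (m+1) * ta := by
      have h1 : (m*(k+2)) * (k+1) = k * (m*(k+2)) + m*(k+2) := by ring
      rw [h1, hsa, hta]
      exact Nat.add_lt_add_left (mul_lt_mul_of_pos_right (by omega) (by omega)) _
    have hfin : ∀ n2 : ℕ, n2 ≤ m*(k+2) → (n2 : ℝ) < (A.ncard : ℝ) / (k + 1) := by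
      intro n2 hn2
      rw [lt_div_iff₀ (by positivity : (0:ℝ) < (k:ℝ)+1)]
      have : (n2 * (k+1) : ℕ) < k * sa + (m+1) * ta :=
        lt_of_le_of_lt (Nat.mul_le_mul_right _ hn2) hcardlt
      rw [cardA]
      calc (n2 : ℝ) * ((k:ℝ)+1) = ((n2 * (k+1) : ℕ) : ℝ) := by push_cast; ring
      _ < ((k * sa + (m+1) * ta : ℕ) : ℝ) := by exact_mod_cast this
    rcases u with ⟨i, s⟩ | ⟨j, s⟩
    · -- hub c
      have hsub : N2 Gg (Sum.inr (Sum.inr (Sum.inl (i,s)))) ∩ A ⊆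
          Set.range (fun s' : Fin sa => (Sum.inl (Sum.inl (i, s')) : Vt)) := by
        rintro w ⟨⟨hnadj, hne, wmid, hvw, hwu⟩, au, rfl⟩
        simp only [hGg, G_adj] at hvw hwu
        rcases wmid with aw | bw | cw
        · exact False.elim hvw
        · rcases bw with ⟨i', s₂⟩ | ⟨t, s₂⟩
          · have hi : i' = i := hvw
            rcases au with ⟨i'', s₃⟩ | ⟨j', s₃⟩
            · have hi2 : i'' = i' := hwu
              exact ⟨s₃, by rw [hi2, hi]⟩
            · exact False.elim hwu
          · exact False.elim hvw
        · exact False.elim hvw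
      have hle : n2card Gg (Sum.inr (Sum.inr (Sum.inl (i,s)))) A ≤ m*(k+2) := by
        have := Set.ncard_le_ncard hsub (Set.toFinite _)
        rw [range_ncard _ (fun s₁ s₂ h => by
          have := Sum.inl_injective (Sum.inl_injective h)
          exact (Prod.ext_iff.mp this).2)] at this
        simpa [n2card, hsa, hta] using this
      exact hfin _ hle
    · -- zone c
      have hsub : N2 Gg (Sum.inr (Sum.inr (Sum.inr (j,s)))) ∩ A ⊆
          Set.range (fun p : {j' : Fin (m+1) // j' ≠ j} × Fin ta =>
            (Sum.inl (Sum.inr (p.1.1, p.2)) : Vt)) := by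
        rintro w ⟨⟨hnadj, hne, wmid, hvw, hwu⟩, au, rfl⟩
        simp only [hGg, G_adj] at hvw hwu
        rcases wmid with aw | bw | cw
        · exact False.elim hvw
        · rcases bw with ⟨i', s₂⟩ | ⟨t, s₂⟩
          · exact False.elim hvw
          · have ht : ¬ ((j - t).val < P) := hvw
            rcases au with ⟨i'', s₃⟩ | ⟨j', s₃⟩
            · exact False.elim hwu
            · have hj' : (j' - t).val < P := hwu
              have hne' : j' ≠ j := by
                rintro rfl
                exact ht hj'
              exact ⟨(⟨j', hne'⟩, s₃), rfl⟩
        · exact False.elim hvw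
      have hle : n2card Gg (Sum.inr (Sum.inr (Sum.inr (j,s)))) A ≤ m*(k+2) := by
        have h0 := Set.ncard_le_ncard hsub (Set.toFinite _)
        rw [range_ncard _ (fun p₁ p₂ h => by
          have h1 := Sum.inr_injective (Sum.inl_injective h)
          have h2 := Prod.ext_iff.mp h1
          exact Prod.ext (Subtype.ext h2.1) h2.2)] at h0
        rw [Nat.card_eq_fintype_card, Fintype.card_prod, Fintype.card_subtype_compl,
          Fintype.card_subtype_eq] at h0
        simpa [n2card, hta] using h0
      exact hfin _ hle


end main
end Stmt6


open Stmt6 in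
theorem stmt_6 (k : ℕ) (x y : ℝ) (hx : x ∈ Set.Ioc (0:ℝ) 1) (hy : y ∈ Set.Ioc (0:ℝ) 1)
    (hkx : (k : ℝ) * x < 1) (hky : (k : ℝ) * y < 1)
    (hsum : x / (1 - k * x) + y / (1 - k * y) ≤ 1)
    (hstrict : Irrational x ∨ Irrational y →
      x / (1 - k * x) + y / (1 - k * y) < 1) :
    ∃ (V : Type) (_ : Fintype V) (G : SimpleGraph V) (A B C : Set V),
      Constrained G x y A B C ∧
      ∀ v ∈ C, (n2card G v A : ℝ) < (A.ncard : ℝ) / (k + 1) := by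
  have hx0 := hx.1
  have hy0 := hy.1
  have hkx1 : (0:ℝ) < 1 - k * x := by linarith
  have hky1 : (0:ℝ) < 1 - k * y := by linarith
  set u := x / (1 - k * x) with hu
  set v := y / (1 - k * y) with hv
  have hu0 : 0 < u := div_pos hx0 hkx1
  have hv0 : 0 < v := div_pos hy0 hky1
  have hxeq : x = u / (1 + k * u) := by
    rw [hu]
    have h1 : (1:ℝ) + k * (x / (1 - k * x)) = 1 / (1 - k * x) := by
      field_simp [hkx1.ne']
      ring
    rw [h1, div_div_eq_mul_div, div_one, div_mul_cancel₀ _ hkx1.ne']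
  have hyeq : y = v / (1 + k * v) := by
    rw [hv]
    have h1 : (1:ℝ) + k * (y / (1 - k * y)) = 1 / (1 - k * y) := by
      field_simp [hky1.ne']
      ring
    rw [h1, div_div_eq_mul_div, div_one, div_mul_cancel₀ _ hky1.ne']
  -- obtain rational over-approximations
  obtain ⟨u', v', huu' : u ≤ (u' : ℝ), hvv' : v ≤ (v' : ℝ), huv1 : (u' : ℝ) + (v' : ℝ) ≤ 1,
      hu'0 : 0 < u', hv'0 : 0 < v'⟩ :
      ∃ u' v' : ℚ, u ≤ (u' : ℝ) ∧ v ≤ (v' : ℝ) ∧ (u' : ℝ) + (v' : ℝ) ≤ 1 ∧ 0 < u' ∧ 0 < v' := by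
    by_cases hi : Irrational x ∨ Irrational y
    · have hs : u + v < 1 := hstrict hi
      obtain ⟨u', hu1, hu2⟩ := exists_rat_btwn (show u < u + (1 - (u+v))/2 by linarith)
      obtain ⟨v', hv1, hv2⟩ := exists_rat_btwn (show v < v + (1 - (u+v))/2 by linarith)
      refine ⟨u', v', le_of_lt hu1, le_of_lt hv1, by linarith, ?_, ?_⟩
      · exact_mod_cast lt_trans hu0 hu1
      · exact_mod_cast lt_trans hv0 hv1
    · push_neg at hi
      obtain ⟨hix, hiy⟩ := hi
      rw [Irrational] at hix hiy
      push_neg at hix hiy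
      obtain ⟨qx, hqx⟩ := hix
      obtain ⟨qy, hqy⟩ := hiy
      have hqx1 : (k:ℚ) * qx < 1 := by
        have : (k:ℝ) * qx < 1 := by rw [hqx]; exact hkx
        exact_mod_cast this
      have hqy1 : (k:ℚ) * qy < 1 := by
        have : (k:ℝ) * qy < 1 := by rw [hqy]; exact hky
        exact_mod_cast this
      refine ⟨qx / (1 - k * qx), qy / (1 - k * qy), ?_, ?_, ?_, ?_, ?_⟩
      · rw [hu]
        push_cast
        rw [hqx]
      · rw [hv]
        push_cast
        rw [hqy]
      · have h1 : ((qx / (1 - k * qx) : ℚ) : ℝ) = u := by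
          rw [hu]
          push_cast
          rw [hqx]
        have h2 : ((qy / (1 - k * qy) : ℚ) : ℝ) = v := by
          rw [hv]
          push_cast
          rw [hqy]
        rw [h1, h2]
        exact hsum
      · apply div_pos
        · have : (0:ℝ) < qx := by rw [hqx]; exact hx0
          exact_mod_cast this
        · linarith
      · apply div_pos
        · have : (0:ℝ) < qy := by rw [hqy]; exact hy0
          exact_mod_cast this
        · linarith
  -- extract natural number parameters
  have hu'lt1 : (u' : ℝ) < 1 := by
    have : (0:ℝ) < v' := by exact_mod_cast hv'0
    linarith
  set a := u'.num.toNat with hadef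
  have hnum_pos : 0 < u'.num := Rat.num_pos.mpr hu'0
  have ha : 1 ≤ a := by omega
  have hacast : (a : ℚ) = (u'.num : ℚ) := by
    rw [hadef]
    exact_mod_cast Int.toNat_of_nonneg hnum_pos.le
  have hu'num : u' = (a : ℚ) / (u'.den : ℚ) := by
    rw [hacast]
    exact_mod_cast (Rat.num_div_den u').symm
  have hden_pos : 0 < u'.den := u'.pos
  have hadlt : a < u'.den := by
    by_contra hcon
    push_neg at hcon
    have h1 : (u'.den : ℚ) ≤ (a : ℚ) := by exact_mod_cast hcon
    have h2 : (1:ℚ) ≤ u' := by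
      rw [hu'num]
      rw [le_div_iff₀ (by exact_mod_cast hden_pos)]
      linarith
    have : (1:ℝ) ≤ (u' : ℝ) := by exact_mod_cast h2
    linarith
  set e := u'.den - a with hedef
  have he : 1 ≤ e := by omega
  have hae : a + e = u'.den := by omega
  set c := v'.num.toNat with hcdef
  have hnumv_pos : 0 < v'.num := Rat.num_pos.mpr hv'0
  have hc : 1 ≤ c := by omega
  have hccast : (c : ℚ) = (v'.num : ℚ) := by
    rw [hcdef]
    exact_mod_cast Int.toNat_of_nonneg hnumv_pos.le
  set δ := v'.den with hδdef
  have hδ : 1 ≤ δ := v'.pos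
  have hv'num : v' = (c : ℚ) / (δ : ℚ) := by
    rw [hccast, hδdef]
    exact_mod_cast (Rat.num_div_den v').symm
  -- real forms
  have hu'R : (u' : ℝ) = (a : ℝ) / ((a : ℝ) + e) := by
    have h0 : ((a + e : ℕ) : ℚ) = (u'.den : ℚ) := by exact_mod_cast hae
    rw [hu'num]
    push_cast [← hae]
    norm_num
  have hv'R : (v' : ℝ) = (c : ℝ) / (δ : ℝ) := by
    rw [hv'num]
    push_cast
    norm_num
  have haeR : (0:ℝ) < (a : ℝ) + e := by positivity
  have hδR : (0:ℝ) < (δ : ℝ) := by exact_mod_cast hδ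
  -- key inequality
  have key : c * (a + e) ≤ e * δ := by
    have h1 : (a : ℝ) / ((a : ℝ) + e) + (c : ℝ) / δ ≤ 1 := by
      rw [← hu'R, ← hv'R]
      exact huv1
    have h2 : (a : ℝ) * δ + (c : ℝ) * ((a:ℝ) + e) ≤ ((a:ℝ) + e) * δ := by
      rw [div_add_div _ _ (ne_of_gt haeR) (ne_of_gt hδR), div_le_one (by positivity)] at h1
      linarith [h1]
    have h3 : (c : ℝ) * ((a:ℝ) + e) ≤ (e:ℝ) * δ := by nlinarith
    exact_mod_cast h3
  -- monotone bound for x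
  have hmono : ∀ (t t' : ℝ), 0 < t → t ≤ t' → t / (1 + k * t) ≤ t' / (1 + k * t') := by
    intro t t' ht htt'
    have ht' : 0 < t' := lt_of_lt_of_le ht htt'
    have h1 : (0:ℝ) < 1 + k * t := by
      have : (0:ℝ) ≤ (k:ℝ) * t := mul_nonneg (by positivity) ht.le
      linarith
    have h2 : (0:ℝ) < 1 + k * t' := by
      have : (0:ℝ) ≤ (k:ℝ) * t' := mul_nonneg (by positivity) ht'.le
      linarith
    rw [div_le_div_iff₀ h1 h2]
    nlinarith
  have hxa : x * (((k:ℝ)+1)*a + e) ≤ a := by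
    have hD : (0:ℝ) < ((k:ℝ)+1)*a + e := by positivity
    rw [← le_div_iff₀ hD]
    have h1 : x ≤ (u' : ℝ) / (1 + k * u') := by
      rw [hxeq]
      exact hmono u (u' : ℝ) hu0 huu'
    have h2 : (u' : ℝ) / (1 + k * u') = (a : ℝ) / (((k:ℝ)+1)*a + e) := by
      rw [hu'R]
      have h3 : ((a:ℝ)+(e:ℝ)) ≠ 0 := ne_of_gt haeR
      have hcan : (a:ℝ)/((a:ℝ)+e) * ((a:ℝ)+e) = a := div_mul_cancel₀ _ h3
      have hden : 1 + (k:ℝ)*((a:ℝ)/((a:ℝ)+e)) = (((k:ℝ)+1)*(a:ℝ)+e)/((a:ℝ)+e) := by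
        rw [eq_div_iff h3, add_mul, one_mul, mul_assoc, hcan]
        ring
      rw [hden, div_div_div_cancel_right₀ h3]
    rw [← h2]
    exact h1
  have hyc : y * ((δ:ℝ) + k*c) ≤ c := by
    have hD : (0:ℝ) < (δ:ℝ) + k*c := by positivity
    rw [← le_div_iff₀ hD]
    have h1 : y ≤ (v' : ℝ) / (1 + k * v') := by
      rw [hyeq]
      exact hmono v (v' : ℝ) hv0 hvv'
    have h2 : (v' : ℝ) / (1 + k * v') = (c : ℝ) / ((δ:ℝ) + k*c) := by
      rw [hv'R]
      have h3 : ((δ:ℝ)) ≠ 0 := ne_of_gt hδR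
      have hcan : (c:ℝ)/(δ:ℝ) * (δ:ℝ) = c := div_mul_cancel₀ _ h3
      have hden : 1 + (k:ℝ)*((c:ℝ)/(δ:ℝ)) = ((δ:ℝ)+(k:ℝ)*(c:ℝ))/(δ:ℝ) := by
        rw [eq_div_iff h3, add_mul, one_mul, mul_assoc, hcan]
      rw [hden, div_div_div_cancel_right₀ h3]
    rw [← h2]
    exact h1
  have hxa' : x * (((k:ℕ)+1)*(a:ℕ) + (e:ℕ) : ℕ) ≤ (a:ℕ) := by
    calc x * (((k+1)*a + e : ℕ) : ℝ) = x * (((k:ℝ)+1)*a + e) := by push_cast; ring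
    _ ≤ a := hxa
  have hyc' : y * ((δ + k*c : ℕ) : ℝ) ≤ (c:ℕ) := by
    calc y * ((δ + k*c : ℕ) : ℝ) = y * ((δ:ℝ) + k*c) := by push_cast; ring
    _ ≤ c := hyc
  exact construction k a c e δ ha hc he hδ key x y (by exact_mod_cast hxa') (by exact_mod_cast hyc')
end

section
/- Let k ≥ 1 be an integer, and let x, y ∈ (0,1] with (k−1)y < 1, x + ky > 1 and kx + x/(1−(k−1)y) ≥ 1. Then every graph G that is (x,y)-biconstrained via a tripartition (A,B,C) contains a vertex v ∈ C with |N²_A(v)| ≥ |A|/k. (That is, ψ(x,y) ≥ 1/k.) -/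
open Set

section AuxLemmas

set_option linter.unusedSectionVars false

variable {V : Type} [Fintype V]

private lemma dc_count [DecidableEq V] (s t : Finset V) (r : V → V → Prop)
    [∀ a b, Decidable (r a b)] :
    ∑ a ∈ s, (t.filter (fun b => r a b)).card = ∑ b ∈ t, (s.filter (fun a => r a b)).card := by
  simp only [Finset.card_filter]
  exact Finset.sum_comm

private lemma ncard_biUnion_le' [DecidableEq V] (F : Finset V) (f : V → Set V) :
    (⋃ i ∈ F, f i).ncard ≤ ∑ i ∈ F, (f i).ncard := by
  induction F using Finset.induction_on with
  | empty => simp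
  | insert a s ha ih =>
    rw [Finset.sum_insert ha, Finset.set_biUnion_insert]
    exact le_trans (Set.ncard_union_le _ _) (Nat.add_le_add_left ih _)

private lemma ncard_sep (W : Set V) (p : V → Prop) [DecidablePred p] :
    {w ∈ W | p w}.ncard = ((Set.toFinite W).toFinset.filter p).card := by
  rw [Set.ncard_eq_toFinset_card _ (Set.toFinite _)]
  congr 1
  ext a
  simp [Set.Finite.mem_toFinset]

private lemma key_ineq (k j : ℕ) (x y : ℝ) (hx : 0 < x) (hy : 0 < y)
    (hky : (k : ℝ) * y < 1) (hjk : j + 1 ≤ k)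
    (h2 : 1 ≤ (k : ℝ) * x + x / (1 - ((k : ℝ) - 1) * y)) :
    1 ≤ (k : ℝ) * x + ((k : ℝ) - j) * x / (1 - (j : ℝ) * y) := by
  have hj : (j : ℝ) ≤ (k : ℝ) - 1 := by
    have : (j + 1 : ℝ) ≤ (k : ℝ) := by exact_mod_cast hjk
    linarith
  have hj0 : (0:ℝ) ≤ (j:ℝ) := Nat.cast_nonneg j
  have d2 : 0 < 1 - ((k : ℝ) - 1) * y := by nlinarith
  have d1 : 0 < 1 - (j : ℝ) * y := by nlinarith
  have hmono : x / (1 - ((k : ℝ) - 1) * y) ≤ ((k : ℝ) - j) * x / (1 - (j : ℝ) * y) := by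
    rw [div_le_div_iff₀ d2 d1]
    nlinarith [mul_nonneg (mul_nonneg hx.le (by linarith : (0:ℝ) ≤ (k : ℝ) - 1 - j))
      (by linarith : (0:ℝ) ≤ 1 - (k : ℝ) * y)]
  linarith

end AuxLemmas

set_option maxHeartbeats 2000000 in
theorem stmt_8 (k : ℕ) (hk : 1 ≤ k) (x y : ℝ)
    (hx : x ∈ Set.Ioc (0:ℝ) 1) (hy : y ∈ Set.Ioc (0:ℝ) 1)
    (h0 : ((k : ℝ) - 1) * y < 1)
    (h1 : 1 < x + k * y)
    (h2 : 1 ≤ (k : ℝ) * x + x / (1 - ((k : ℝ) - 1) * y))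
    {V : Type} [Fintype V] (G : SimpleGraph V) (A B C : Set V)
    (hG : Biconstrained G x y A B C) :
    ∃ v ∈ C, (A.ncard : ℝ) / k ≤ (n2card G v A : ℝ) := by
  classical
  obtain ⟨⟨⟨hAne, hBne, hCne, hdAB, hdAC, hdBC, hunion, hAst, hBst, hCst⟩, hxAB, hyBC, hAC⟩,
    hxBA, hyCB⟩ := hG
  obtain ⟨hx0, hx1⟩ := hx
  obtain ⟨hy0, hy1⟩ := hy
  by_contra hcon
  push_neg at hcon
  set n := A.ncard with hn_def
  set m := B.ncard with hm_def
  set p := C.ncard with hp_def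
  have hn : 0 < n := (Set.ncard_pos (Set.toFinite A)).2 hAne
  have hm : 0 < m := (Set.ncard_pos (Set.toFinite B)).2 hBne
  have hp : 0 < p := (Set.ncard_pos (Set.toFinite C)).2 hCne
  have hk0R : (0:ℝ) < k := by exact_mod_cast hk
  have hnR : (0:ℝ) < n := by exact_mod_cast hn
  have hmR : (0:ℝ) < m := by exact_mod_cast hm
  have hpR : (0:ℝ) < p := by exact_mod_cast hp
  -- neighbourhoods of A- and C-vertices lie in B
  have hAnbr : ∀ a ∈ A, G.neighborSet a ⊆ B := by
    intro a ha w hw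
    have hwu : w ∈ A ∪ B ∪ C := by rw [hunion]; trivial
    rcases hwu with (hA' | hB') | hC'
    · exact absurd hw (hAst a ha w hA')
    · exact hB'
    · exact absurd hw (hAC a ha w hC')
  have hCnbr : ∀ c ∈ C, G.neighborSet c ⊆ B := by
    intro c hc w hw
    have hwu : w ∈ A ∪ B ∪ C := by rw [hunion]; trivial
    rcases hwu with (hA' | hB') | hC'
    · exact absurd (G.adj_symm hw) (hAC w hA' c hc)
    · exact hB'
    · exact absurd hw (hCst c hc w hC')
  have hdegA : ∀ a ∈ A, x * m ≤ ((G.neighborSet a).ncard : ℝ) := by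
    intro a ha
    have h := hxAB a ha
    rwa [show nbrCard G a B = (G.neighborSet a).ncard by
      rw [nbrCard, Set.inter_eq_self_of_subset_right (hAnbr a ha)]] at h
  have hdegC : ∀ c ∈ C, y * m ≤ ((G.neighborSet c).ncard : ℝ) := by
    intro c hc
    have h := hyCB c hc
    rwa [show nbrCard G c B = (G.neighborSet c).ncard by
      rw [nbrCard, Set.inter_eq_self_of_subset_right (hCnbr c hc)]] at h
  have hN2mem : ∀ a ∈ A, ∀ c ∈ C, ∀ b : V, G.Adj c b → G.Adj b a → a ∈ N2 G c ∩ A := by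
    intro a ha c hc b hcb hba
    refine ⟨⟨?_, ?_, b, hcb, hba⟩, ha⟩
    · intro h; exact hAC a ha c hc (G.adj_symm h)
    · intro h; exact Set.disjoint_left.1 hdAC ha (h ▸ hc)
  have hcon' : ∀ c ∈ C, ((N2 G c ∩ A).ncard : ℝ) < (n:ℝ) / k := by
    intro c hc
    have h := hcon c hc
    rwa [show n2card G c A = (N2 G c ∩ A).ncard from rfl] at h
  -- Step 1 : k * y < 1
  have hky : (k:ℝ) * y < 1 := by
    have hDa : ∃ a ∈ A, (({c ∈ C | a ∈ N2 G c}).ncard : ℝ) < (p:ℝ) / k := by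
      by_contra hno
      push_neg at hno
      set Af := (Set.toFinite A).toFinset with hAf
      set Cf := (Set.toFinite C).toFinset with hCf
      have hCfne : Cf.Nonempty := by
        rw [hCf, Set.Finite.toFinset_nonempty]; exact hCne
      have hAfcard : Af.card = n := by rw [hAf, ← Set.ncard_eq_toFinset_card]
      have hCfcard : Cf.card = p := by rw [hCf, ← Set.ncard_eq_toFinset_card]
      have hsum := dc_count Af Cf (fun a c => a ∈ N2 G c)
      have hlow : (n : ℝ) * ((p:ℝ) / k) ≤
          ((∑ a ∈ Af, (Cf.filter (fun c => a ∈ N2 G c)).card : ℕ) : ℝ) := by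
        push_cast
        calc (n:ℝ) * ((p:ℝ)/k) = ∑ _a ∈ Af, ((p:ℝ)/k) := by
              rw [Finset.sum_const, hAfcard, nsmul_eq_mul]
          _ ≤ ∑ a ∈ Af, ((Cf.filter (fun c => a ∈ N2 G c)).card : ℝ) := by
              apply Finset.sum_le_sum
              intro a ha
              have haA : a ∈ A := (Set.Finite.mem_toFinset _).1 ha
              have := hno a haA
              rwa [ncard_sep C (fun c => a ∈ N2 G c)] at this
      have hup : ((∑ c ∈ Cf, (Af.filter (fun a => a ∈ N2 G c)).card : ℕ) : ℝ) <
          (p:ℝ) * ((n:ℝ)/k) := by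
        push_cast
        calc ∑ c ∈ Cf, ((Af.filter (fun a => a ∈ N2 G c)).card : ℝ)
            < ∑ _c ∈ Cf, ((n:ℝ)/k) := by
              apply Finset.sum_lt_sum_of_nonempty hCfne
              intro c hc
              have hcC : c ∈ C := (Set.Finite.mem_toFinset _).1 hc
              have hseteq : N2 G c ∩ A = {a ∈ A | a ∈ N2 G c} := by
                ext a
                simp only [Set.mem_inter_iff, Set.mem_sep_iff]
                tauto
              have he : (Af.filter (fun a => a ∈ N2 G c)).card = (N2 G c ∩ A).ncard := by
                rw [hseteq, ncard_sep A (fun a => a ∈ N2 G c)]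
              rw [he]
              exact hcon' c hcC
          _ = (p:ℝ) * ((n:ℝ)/k) := by rw [Finset.sum_const, hCfcard, nsmul_eq_mul]
      rw [hsum] at hlow
      have hee : (n:ℝ) * ((p:ℝ)/k) = (p:ℝ) * ((n:ℝ)/k) := by ring
      linarith
    obtain ⟨a, haA, hDa⟩ := hDa
    have hbne : (G.neighborSet a).Nonempty := by
      rw [← Set.ncard_pos (Set.toFinite _)]
      have := lt_of_lt_of_le (mul_pos hx0 hmR) (hdegA a haA)
      exact_mod_cast this
    obtain ⟨b, hab⟩ := hbne
    have hbB : b ∈ B := hAnbr a haA hab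
    have hsub : C ∩ G.neighborSet b ⊆ {c ∈ C | a ∈ N2 G c} := by
      rintro c ⟨hcC, hbc⟩
      exact ⟨hcC, (hN2mem a haA c hcC b (G.adj_symm hbc) (G.adj_symm hab)).1⟩
    have hyb : y * p ≤ ((C ∩ G.neighborSet b).ncard : ℝ) := hyBC b hbB
    have hle : ((C ∩ G.neighborSet b).ncard : ℝ) ≤ (({c ∈ C | a ∈ N2 G c}).ncard : ℝ) := by
      exact_mod_cast Set.ncard_le_ncard hsub (Set.toFinite _)
    have : y * p < (p:ℝ)/k := by linarith
    rw [lt_div_iff₀ hk0R] at this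
    nlinarith
  -- the greedy construction
  have main : ∀ j : ℕ, j ≤ k → ∃ F : Finset V, ↑F ⊆ C ∧ F.card = j ∧
      ((j : ℝ) * (y * m) ≤ ((⋃ c ∈ F, G.neighborSet c).ncard : ℝ)) := by
    intro j
    induction j with
    | zero =>
      intro _
      exact ⟨∅, by simp, by simp, by simp⟩
    | succ j ih =>
      intro hjk
      obtain ⟨F, hFC, hFcard, hFU⟩ := ih (Nat.le_of_succ_le hjk)
      by_cases hext : ∃ c ∈ C, y * m ≤ (((G.neighborSet c) \ ⋃ c' ∈ F, G.neighborSet c').ncard : ℝ)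
      · obtain ⟨c, hcC, hcnew⟩ := hext
        have hymp : (0:ℝ) < y * m := mul_pos hy0 hmR
        have hcF : c ∉ F := by
          intro hcF
          have hsub : G.neighborSet c ⊆ ⋃ c' ∈ F, G.neighborSet c' := by
            exact Set.subset_biUnion_of_mem hcF
          rw [Set.diff_eq_empty.2 hsub] at hcnew
          simp only [Set.ncard_empty, Nat.cast_zero] at hcnew
          linarith
        refine ⟨insert c F, ?_, ?_, ?_⟩
        · rw [Finset.coe_insert]; exact Set.insert_subset hcC hFC
        · rw [Finset.card_insert_of_notMem hcF, hFcard]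
        · rw [Finset.set_biUnion_insert]
          have hcard : ((⋃ c' ∈ F, G.neighborSet c').ncard
              + ((G.neighborSet c) \ ⋃ c' ∈ F, G.neighborSet c').ncard : ℕ)
              = (G.neighborSet c ∪ ⋃ c' ∈ F, G.neighborSet c').ncard := by
            rw [Set.union_comm, ← Set.union_diff_self,
              Set.ncard_union_eq Set.disjoint_sdiff_right (Set.toFinite _) (Set.toFinite _)]
          rw [← hcard]
          push_cast
          linarith
      · exfalso
        push_neg at hext
        rcases F.eq_empty_or_nonempty with hFe | hFne
        · obtain ⟨c₀, hc₀⟩ := hCne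
          have hstuck := hext c₀ hc₀
          rw [hFe] at hstuck
          simp only [Finset.notMem_empty, Set.iUnion_of_empty, Set.iUnion_empty,
            Set.diff_empty] at hstuck
          exact absurd (hdegC c₀ hc₀) (not_le.2 hstuck)
        · -- the stuck case, 1 ≤ j ≤ k-1
          set U := ⋃ c' ∈ F, G.neighborSet c' with hU_def
          set T := ⋃ c' ∈ F, (N2 G c' ∩ A) with hT_def
          have hjkR : (j:ℝ) + 1 ≤ (k:ℝ) := by exact_mod_cast hjk
          have hTA : T ⊆ A := by
            intro a ha
            obtain ⟨c', _, hca⟩ := Set.mem_iUnion₂.1 ha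
            exact hca.2
          have hUB : U ⊆ B := by
            intro b hb
            obtain ⟨c', hc', hcb⟩ := Set.mem_iUnion₂.1 hb
            exact hCnbr c' (hFC hc') hcb
          have hTlt : (T.ncard : ℝ) < (j:ℝ) * ((n:ℝ) / k) := by
            have hle1 : (T.ncard : ℝ) ≤ ((∑ c' ∈ F, (N2 G c' ∩ A).ncard : ℕ) : ℝ) := by
              exact_mod_cast ncard_biUnion_le' F _
            have hlt2 : ((∑ c' ∈ F, (N2 G c' ∩ A).ncard : ℕ) : ℝ) < (j:ℝ) * ((n:ℝ)/k) := by
              push_cast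
              calc ∑ c' ∈ F, ((N2 G c' ∩ A).ncard : ℝ)
                  < ∑ _c' ∈ F, ((n:ℝ)/k) :=
                    Finset.sum_lt_sum_of_nonempty hFne (fun c' hc' => hcon' c' (hFC hc'))
                _ = (j:ℝ) * ((n:ℝ)/k) := by rw [Finset.sum_const, hFcard, nsmul_eq_mul]
            linarith
          set A' := A \ T with hA'_def
          have hA'A : A' ⊆ A := Set.diff_subset
          have hTn : T.ncard ≤ n := Set.ncard_le_ncard hTA (Set.toFinite A)
          have hA'cast : (A'.ncard : ℝ) = (n:ℝ) - T.ncard :=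
            Set.cast_ncard_sdiff hTA (Set.toFinite A)
          have hA'card : ((k:ℝ) - j) * n / k < (A'.ncard : ℝ) := by
            have e : ((k:ℝ) - j) * n / k = (n:ℝ) - (j:ℝ) * ((n:ℝ)/k) := by
              field_simp
            rw [e, hA'cast]
            linarith
          have hA'pos : (0:ℝ) < (A'.ncard : ℝ) := by
            have : (0:ℝ) < ((k:ℝ) - j) * n / k :=
              div_pos (mul_pos (by linarith) hnR) hk0R
            linarith
          have hA'ne : A'.Nonempty := by
            rw [← Set.ncard_pos (Set.toFinite _)]
            exact_mod_cast hA'pos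
          have hA'nbr : ∀ a ∈ A', G.neighborSet a ⊆ B \ U := by
            intro a ha b hb
            refine ⟨hAnbr a (hA'A ha) hb, ?_⟩
            intro hbU
            obtain ⟨c', hc'F, hcb⟩ := Set.mem_iUnion₂.1 hbU
            have hmem : a ∈ N2 G c' ∩ A :=
              hN2mem a (hA'A ha) c' (hFC hc'F) b hcb (G.adj_symm hb)
            exact ha.2 (Set.mem_iUnion₂.2 ⟨c', hc'F, hmem⟩)
          set B' := B \ U with hB'_def
          have hB'cast : (B'.ncard : ℝ) = (m:ℝ) - U.ncard :=
            Set.cast_ncard_sdiff hUB (Set.toFinite B)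
          have hB'card : (B'.ncard : ℝ) ≤ (m:ℝ) - (j:ℝ) * (y * m) := by
            rw [hB'cast]; linarith
          obtain ⟨a₀, ha₀⟩ := hA'ne
          have hB'pos : (0:ℝ) < (B'.ncard : ℝ) := by
            have h1 : (G.neighborSet a₀).ncard ≤ B'.ncard :=
              Set.ncard_le_ncard (hA'nbr a₀ ha₀) (Set.toFinite _)
            have h2 : (0:ℝ) < ((G.neighborSet a₀).ncard : ℝ) :=
              lt_of_lt_of_le (mul_pos hx0 hmR) (hdegA a₀ (hA'A ha₀))
            have h3 : ((G.neighborSet a₀).ncard : ℝ) ≤ (B'.ncard : ℝ) := by exact_mod_cast h1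
            linarith
          have hB'ne : B'.Nonempty := by
            rw [← Set.ncard_pos (Set.toFinite _)]
            exact_mod_cast hB'pos
          -- pigeonhole: some vertex of B' has many neighbours in A'
          have hbstar : ∃ b ∈ B',
              x * m * (A'.ncard:ℝ) / (B'.ncard:ℝ) ≤ ((A' ∩ G.neighborSet b).ncard : ℝ) := by
            by_contra hno
            push_neg at hno
            set A'f := (Set.toFinite A').toFinset with hA'f
            set B'f := (Set.toFinite B').toFinset with hB'f
            have hA'fcard : A'f.card = A'.ncard := by rw [hA'f, ← Set.ncard_eq_toFinset_card]
            have hB'fcard : B'f.card = B'.ncard := by rw [hB'f, ← Set.ncard_eq_toFinset_card]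
            have hB'fne : B'f.Nonempty := by
              rw [hB'f, Set.Finite.toFinset_nonempty]; exact hB'ne
            have hdc := dc_count A'f B'f (fun a b => G.Adj a b)
            have ea : ∀ a ∈ A', ((B'f.filter (fun b => G.Adj a b)).card : ℕ)
                = (G.neighborSet a).ncard := by
              intro a ha
              have hset : {b ∈ B' | G.Adj a b} = G.neighborSet a := by
                ext b
                simp only [Set.mem_sep_iff, SimpleGraph.mem_neighborSet]
                exact ⟨fun h => h.2, fun h => ⟨hA'nbr a ha h, h⟩⟩
              rw [← ncard_sep B' (fun b => G.Adj a b), hset]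
            have eb : ∀ b : V, ((A'f.filter (fun a => G.Adj a b)).card : ℕ)
                = (A' ∩ G.neighborSet b).ncard := by
              intro b
              have hset : {a ∈ A' | G.Adj a b} = A' ∩ G.neighborSet b := by
                ext a
                simp only [Set.mem_sep_iff, Set.mem_inter_iff, SimpleGraph.mem_neighborSet]
                constructor
                · rintro ⟨h1, h2⟩; exact ⟨h1, h2.symm⟩
                · rintro ⟨h1, h2⟩; exact ⟨h1, h2.symm⟩
              rw [← ncard_sep A' (fun a => G.Adj a b), hset]
            have hlow : x * m * (A'.ncard:ℝ) ≤
                ((∑ b ∈ B'f, (A'f.filter (fun a => G.Adj a b)).card : ℕ) : ℝ) := by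
              rw [← hdc]
              push_cast
              calc x * m * (A'.ncard:ℝ) = ∑ _a ∈ A'f, (x * m) := by
                    rw [Finset.sum_const, hA'fcard, nsmul_eq_mul]; ring
                _ ≤ ∑ a ∈ A'f, ((B'f.filter (fun b => G.Adj a b)).card : ℝ) := by
                    apply Finset.sum_le_sum
                    intro a ha
                    have haA' : a ∈ A' := (Set.Finite.mem_toFinset _).1 ha
                    rw [ea a haA']
                    exact hdegA a (hA'A haA')
            have hup : ((∑ b ∈ B'f, (A'f.filter (fun a => G.Adj a b)).card : ℕ) : ℝ) <
                x * m * (A'.ncard:ℝ) := by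
              push_cast
              calc ∑ b ∈ B'f, ((A'f.filter (fun a => G.Adj a b)).card : ℝ)
                  < ∑ _b ∈ B'f, (x * m * (A'.ncard:ℝ) / (B'.ncard:ℝ)) := by
                    apply Finset.sum_lt_sum_of_nonempty hB'fne
                    intro b hb
                    rw [eb b]
                    exact hno b ((Set.Finite.mem_toFinset _).1 hb)
                _ = x * m * (A'.ncard:ℝ) := by
                    rw [Finset.sum_const, hB'fcard, nsmul_eq_mul]
                    field_simp
            linarith
          obtain ⟨bs, hbsB', hbs⟩ := hbstar
          have hbsB : bs ∈ B := hbsB'.1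
          have hcsne : (C ∩ G.neighborSet bs).Nonempty := by
            rw [← Set.ncard_pos (Set.toFinite _)]
            have h1 : y * p ≤ ((C ∩ G.neighborSet bs).ncard : ℝ) := hyBC bs hbsB
            have : (0:ℝ) < ((C ∩ G.neighborSet bs).ncard : ℝ) :=
              lt_of_lt_of_le (mul_pos hy0 hpR) h1
            exact_mod_cast this
          obtain ⟨cs, hcsC, hcsbs⟩ := hcsne
          have hcs_stuck := hext cs hcsC
          have hcsU : (G.neighborSet cs ∩ U).Nonempty := by
            have hdecomp : (G.neighborSet cs ∩ U).ncard + (G.neighborSet cs \ U).ncard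
                = (G.neighborSet cs).ncard :=
              Set.ncard_inter_add_ncard_diff_eq_ncard _ _ (Set.toFinite _)
            have hc2 : ((G.neighborSet cs).ncard : ℝ)
                = ((G.neighborSet cs ∩ U).ncard:ℝ) + ((G.neighborSet cs \ U).ncard:ℝ) := by
              exact_mod_cast hdecomp.symm
            have : (0:ℝ) < ((G.neighborSet cs ∩ U).ncard : ℝ) := by
              have := hdegC cs hcsC
              linarith
            rw [← Set.ncard_pos (Set.toFinite _)]
            exact_mod_cast this
          obtain ⟨b', hb'N, hb'U⟩ := hcsU
          have hb'B : b' ∈ B := hUB hb'U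
          obtain ⟨cF, hcFF, hb'cF⟩ := Set.mem_iUnion₂.1 hb'U
          set S1 := A ∩ G.neighborSet b' with hS1_def
          set S2 := A' ∩ G.neighborSet bs with hS2_def
          have hS1T : S1 ⊆ T := by
            rintro a ⟨haA, hab'⟩
            exact Set.mem_iUnion₂.2 ⟨cF, hcFF, hN2mem a haA cF (hFC hcFF) b' hb'cF hab'⟩
          have hS1N2 : S1 ⊆ N2 G cs ∩ A := by
            rintro a ⟨haA, hab'⟩
            exact hN2mem a haA cs hcsC b' hb'N hab'
          have hS2N2 : S2 ⊆ N2 G cs ∩ A := by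
            rintro a ⟨haA', habs⟩
            exact hN2mem a (hA'A haA') cs hcsC bs (G.adj_symm hcsbs) habs
          have hdisj : Disjoint S1 S2 := by
            rw [Set.disjoint_left]
            intro a haS1 haS2
            exact haS2.1.2 (hS1T haS1)
          have hsum12 : (S1.ncard : ℝ) + (S2.ncard : ℝ) ≤ ((N2 G cs ∩ A).ncard : ℝ) := by
            have hu : (S1 ∪ S2).ncard = S1.ncard + S2.ncard :=
              Set.ncard_union_eq hdisj (Set.toFinite _) (Set.toFinite _)
            have hle : (S1 ∪ S2).ncard ≤ (N2 G cs ∩ A).ncard :=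
              Set.ncard_le_ncard (Set.union_subset hS1N2 hS2N2) (Set.toFinite _)
            rw [hu] at hle
            exact_mod_cast hle
          have hS1x : x * n ≤ (S1.ncard : ℝ) := hxBA b' hb'B
          have hcfin := hcon' cs hcsC
          have hd1 : (0:ℝ) < 1 - (j:ℝ) * y := by
            have hjle : (j:ℝ) ≤ (k:ℝ) - 1 := by linarith
            have := mul_le_mul_of_nonneg_right hjle hy0.le
            linarith
          have hkey := key_ineq k j x y hx0 hy0 hky hjk h2
          -- lower bound for S2
          have hs2low : x * (((k:ℝ) - j) * n / k) / (1 - (j:ℝ)*y) < (S2.ncard : ℝ) := by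
            have hBle : (B'.ncard : ℝ) ≤ (1 - (j:ℝ)*y) * m := by
              nlinarith [hB'card]
            have h1 : x * m * (A'.ncard:ℝ) / ((1 - (j:ℝ)*y) * m)
                ≤ x * m * (A'.ncard:ℝ) / (B'.ncard:ℝ) :=
              div_le_div_of_nonneg_left (by positivity) hB'pos hBle
            have h2' : x * m * (A'.ncard:ℝ) / ((1 - (j:ℝ)*y) * m)
                = x * (A'.ncard:ℝ) / (1 - (j:ℝ)*y) := by
              field_simp
            have h3 : x * (((k:ℝ) - j) * n / k) / (1 - (j:ℝ)*y)
                < x * (A'.ncard:ℝ) / (1 - (j:ℝ)*y) :=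
              (div_lt_div_iff_of_pos_right hd1).2 (mul_lt_mul_of_pos_left hA'card hx0)
            rw [h2'] at h1
            linarith [hbs]
          have hfinal : (n:ℝ)/k ≤ x*n + x*(((k:ℝ)-j)*n/k)/(1-(j:ℝ)*y) := by
            have hnk : (0:ℝ) < (n:ℝ)/k := div_pos hnR hk0R
            have hmul := mul_le_mul_of_nonneg_left hkey hnk.le
            calc (n:ℝ)/k = (n:ℝ)/k * 1 := (mul_one _).symm
              _ ≤ (n:ℝ)/k * ((k:ℝ)*x + ((k:ℝ)-j)*x/(1-(j:ℝ)*y)) := hmul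
              _ = x*n + x*(((k:ℝ)-j)*n/k)/(1-(j:ℝ)*y) := by
                  field_simp
          linarith [hfinal, hs2low, hS1x, hsum12, hcfin]
  -- conclusion : with j = k we contradict  1 < x + k*y
  obtain ⟨F, hFC, hFcard, hFU⟩ := main k le_rfl
  have hFne : F.Nonempty := Finset.card_pos.1 (by rw [hFcard]; exact hk)
  set U := ⋃ c' ∈ F, G.neighborSet c' with hU_def
  set T := ⋃ c' ∈ F, (N2 G c' ∩ A) with hT_def
  have hTA : T ⊆ A := by
    intro a ha
    obtain ⟨c', _, hca⟩ := Set.mem_iUnion₂.1 ha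
    exact hca.2
  have hUB : U ⊆ B := by
    intro b hb
    obtain ⟨c', hc', hcb⟩ := Set.mem_iUnion₂.1 hb
    exact hCnbr c' (hFC hc') hcb
  have hTlt : (T.ncard : ℝ) < (n:ℝ) := by
    have hle1 : (T.ncard : ℝ) ≤ ((∑ c' ∈ F, (N2 G c' ∩ A).ncard : ℕ) : ℝ) := by
      exact_mod_cast ncard_biUnion_le' F _
    have hlt2 : ((∑ c' ∈ F, (N2 G c' ∩ A).ncard : ℕ) : ℝ) < (k:ℝ) * ((n:ℝ)/k) := by
      push_cast
      calc ∑ c' ∈ F, ((N2 G c' ∩ A).ncard : ℝ)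
          < ∑ _c' ∈ F, ((n:ℝ)/k) :=
            Finset.sum_lt_sum_of_nonempty hFne (fun c' hc' => hcon' c' (hFC hc'))
        _ = (k:ℝ) * ((n:ℝ)/k) := by rw [Finset.sum_const, hFcard, nsmul_eq_mul]
    have he : (k:ℝ) * ((n:ℝ)/k) = (n:ℝ) := by field_simp
    linarith
  have hTn : T.ncard < n := by exact_mod_cast hTlt
  obtain ⟨a, haA, haT⟩ := Set.exists_mem_notMem_of_ncard_lt_ncard hTn (Set.toFinite T)
  have hanbr : G.neighborSet a ⊆ B \ U := by
    intro b hb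
    refine ⟨hAnbr a haA hb, ?_⟩
    intro hbU
    obtain ⟨c', hc'F, hcb⟩ := Set.mem_iUnion₂.1 hbU
    have hmem : a ∈ N2 G c' ∩ A := hN2mem a haA c' (hFC hc'F) b hcb (G.adj_symm hb)
    exact haT (Set.mem_iUnion₂.2 ⟨c', hc'F, hmem⟩)
  have hBU : ((B \ U).ncard : ℝ) = (m:ℝ) - U.ncard :=
    Set.cast_ncard_sdiff hUB (Set.toFinite B)
  have h5 : ((G.neighborSet a).ncard : ℝ) ≤ (m:ℝ) - (k:ℝ) * (y*m) := by
    have h6 : (G.neighborSet a).ncard ≤ (B \ U).ncard :=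
      Set.ncard_le_ncard hanbr (Set.toFinite _)
    have h7 : ((G.neighborSet a).ncard : ℝ) ≤ ((B \ U).ncard : ℝ) := by exact_mod_cast h6
    rw [hBU] at h7
    linarith
  have h8 := hdegA a haA
  have h9 : (0:ℝ) < x + (k:ℝ)*y - 1 := by linarith
  nlinarith [mul_pos h9 hmR]
end

section
/- Let x, y ∈ (0,1]. If x + y > 1, or if x + y = 1 and x is irrational, then every graph G that is (x,y)-constrained via a tripartition (A,B,C) contains a vertex v ∈ C with N²_A(v) = A. (That is, φ(x,y) = 1.) -/
open Set

theorem stmt_14 (x y : ℝ) (hx : x ∈ Set.Ioc (0:ℝ) 1) (hy : y ∈ Set.Ioc (0:ℝ) 1)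
    (h : 1 < x + y ∨ (x + y = 1 ∧ Irrational x))
    {V : Type} [Fintype V] (G : SimpleGraph V) (A B C : Set V)
    (hG : Constrained G x y A B C) :
    ∃ v ∈ C, N2 G v ∩ A = A := by
  classical
  by_contra hcon
  push_neg at hcon
  obtain ⟨⟨hA, hB, hC, hAB, hAC, hBC, hcover, sA, sB, sC⟩, hxB, hyB, hnoAC⟩ := hG
  obtain ⟨hx0, hx1⟩ := hx
  obtain ⟨hy0, hy1⟩ := hy
  set n := B.ncard with hn
  set m := C.ncard with hm
  have hnpos : 0 < n := (Set.ncard_pos B.toFinite).mpr hB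
  have hmpos : 0 < m := (Set.ncard_pos C.toFinite).mpr hC
  -- per-vertex strict bound
  have hstep : ∀ v ∈ C, (nbrCard G v B : ℝ) < y * n := by
    intro v hv
    obtain ⟨a, ha, hna⟩ : ∃ a ∈ A, a ∉ N2 G v := by
      by_contra hc
      push_neg at hc
      exact hcon v hv (Set.inter_eq_right.mpr hc)
    have hadj : ¬ G.Adj v a := fun hh => hnoAC a ha v hv hh.symm
    have hne : v ≠ a := fun hh => (hAC.ne_of_mem ha hv) hh.symm
    have hno : ¬ ∃ w, G.Adj v w ∧ G.Adj w a := by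
      rintro ⟨w, h1, h2⟩
      exact hna ⟨hadj, hne, w, h1, h2⟩
    have hdisj : Disjoint (B ∩ G.neighborSet v) (B ∩ G.neighborSet a) := by
      rw [Set.disjoint_left]
      rintro b ⟨hbB, hbv⟩ ⟨-, hba⟩
      exact hno ⟨b, hbv, (hba : G.Adj a b).symm⟩
    have hsum : nbrCard G v B + nbrCard G a B ≤ n := by
      rw [nbrCard, nbrCard, ← Set.ncard_union_eq hdisj (Set.toFinite _) (Set.toFinite _)]
      exact Set.ncard_le_ncard (by rintro z (hz | hz) <;> exact hz.1) B.toFinite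
    have hxa := hxB a ha
    have hcast : (nbrCard G v B : ℝ) ≤ n - x * n := by
      have hc2 : (nbrCard G v B : ℝ) + (nbrCard G a B : ℝ) ≤ n := by exact_mod_cast hsum
      linarith
    rcases h with h1 | ⟨h2, hirr⟩
    · have hnR : (0:ℝ) < n := by exact_mod_cast hnpos
      nlinarith
    · have heq : y * (n : ℝ) = n - x * n := by nlinarith
      have hne' : (nbrCard G v B : ℝ) ≠ n - x * n := by
        intro he
        refine hirr ⟨((n : ℚ) - (nbrCard G v B : ℚ)) / n, ?_⟩
        have hn0 : (n : ℝ) ≠ 0 := by positivity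
        push_cast
        field_simp
        linarith
      rw [heq]
      exact lt_of_le_of_ne hcast hne'
  -- Finset versions
  set Bt := B.toFinite.toFinset with hBt
  set Ct := C.toFinite.toFinset with hCt
  have hcardB : Bt.card = n := (Set.ncard_eq_toFinset_card B B.toFinite).symm
  have hcardC : Ct.card = m := (Set.ncard_eq_toFinset_card C C.toFinite).symm
  have hrepr : ∀ (S : Set V) (hS : S.Finite) (v : V),
      nbrCard G v S = (hS.toFinset.filter (fun b => G.Adj v b)).card := by
    intro S hS v
    have : S ∩ G.neighborSet v = ↑(hS.toFinset.filter (fun b => G.Adj v b)) := by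
      ext b
      simp only [Set.mem_inter_iff, SimpleGraph.mem_neighborSet, Finset.coe_filter,
        Set.Finite.mem_toFinset, Set.mem_setOf_eq]
    rw [nbrCard, this, Set.ncard_coe_finset]
  -- double counting
  have hdc : ∑ v ∈ Ct, nbrCard G v B = ∑ b ∈ Bt, nbrCard G b C := by
    simp only [hrepr B B.toFinite, hrepr C C.toFinite, Finset.card_filter]
    rw [Finset.sum_comm]
    refine Finset.sum_congr rfl fun b _ => Finset.sum_congr rfl fun v _ => ?_
    rw [G.adj_comm]
  have hub : (∑ v ∈ Ct, (nbrCard G v B : ℝ)) < ∑ _v ∈ Ct, y * n := by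
    refine Finset.sum_lt_sum_of_nonempty ?_ fun v hv => hstep v ?_
    · exact (Set.Finite.toFinset_nonempty _).mpr hC
    · exact (Set.Finite.mem_toFinset _).mp hv
  have hlb : (∑ _b ∈ Bt, y * m) ≤ ∑ b ∈ Bt, (nbrCard G b C : ℝ) := by
    refine Finset.sum_le_sum fun b hb => ?_
    exact hyB b ((Set.Finite.mem_toFinset _).mp hb)
  have hdcR : (∑ v ∈ Ct, (nbrCard G v B : ℝ)) = ∑ b ∈ Bt, (nbrCard G b C : ℝ) := by
    exact_mod_cast congrArg (Nat.cast : ℕ → ℝ) hdc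
  rw [Finset.sum_const, hcardC, nsmul_eq_mul] at hub
  rw [Finset.sum_const, hcardB, nsmul_eq_mul] at hlb
  have hring : (m : ℝ) * (y * n) = n * (y * m) := by ring
  linarith
end

section
/- Let k > 0 be an integer and let x ∈ (0,1] satisfy (1−x)^k < x. Then every graph G that is (x,x)-constrained via a tripartition (A,B,C) contains a vertex v ∈ C with |N²_A(v)| ≥ |A|/k. (That is, φ(x,x) ≥ 1/k.) -/
open Set

open Finset in
lemma avg_step {V : Type} [DecidableEq V] (G : SimpleGraph V) [DecidableRel G.Adj]
    (x : ℝ) (Ct T : Finset V) (hCt : Ct.Nonempty)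
    (hdeg : ∀ b ∈ T, x * (Ct.card : ℝ) ≤ ((Ct.filter (fun c => G.Adj b c)).card : ℝ)) :
    ∃ c ∈ Ct, x * (T.card : ℝ) ≤ ((T.filter (fun b => G.Adj b c)).card : ℝ) := by
  by_contra hc
  push_neg at hc
  have hflip : ∑ c ∈ Ct, ((T.filter (fun b => G.Adj b c)).card : ℝ)
      = ∑ b ∈ T, ((Ct.filter (fun c => G.Adj b c)).card : ℝ) := by
    simp only [Finset.card_filter]
    push_cast
    rw [Finset.sum_comm]
  have h1 : (T.card : ℝ) * (x * Ct.card) ≤ ∑ b ∈ T, ((Ct.filter (fun c => G.Adj b c)).card : ℝ) := by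
    calc (T.card : ℝ) * (x * Ct.card) = ∑ _b ∈ T, x * (Ct.card : ℝ) := by
          rw [Finset.sum_const, nsmul_eq_mul]
      _ ≤ _ := Finset.sum_le_sum hdeg
  have h2 : ∑ c ∈ Ct, ((T.filter (fun b => G.Adj b c)).card : ℝ)
      < ∑ _c ∈ Ct, x * (T.card : ℝ) :=
    Finset.sum_lt_sum_of_nonempty hCt (fun c hcc => hc c hcc)
  rw [Finset.sum_const, nsmul_eq_mul] at h2
  have heq : (T.card : ℝ) * (x * Ct.card) = (Ct.card : ℝ) * (x * T.card) := by ring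
  linarith [hflip ▸ h1, h2]

open Finset in
lemma greedy_cover {V : Type} [DecidableEq V] (G : SimpleGraph V) [DecidableRel G.Adj]
    (x : ℝ) (hx1 : x ≤ 1) (Bt Ct : Finset V) (hCt : Ct.Nonempty)
    (hdeg : ∀ b ∈ Bt, x * (Ct.card : ℝ) ≤ ((Ct.filter (fun c => G.Adj b c)).card : ℝ)) :
    ∀ n : ℕ, ∃ s : Finset V, s ⊆ Ct ∧ s.card ≤ n ∧
      ((Bt.filter (fun b => ∀ c ∈ s, ¬ G.Adj b c)).card : ℝ) ≤ (1 - x) ^ n * Bt.card := by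
  intro n
  induction n with
  | zero =>
    refine ⟨∅, Finset.empty_subset _, le_refl _, ?_⟩
    simp
  | succ n ih =>
    obtain ⟨s, hs, hcard, hbound⟩ := ih
    set T := Bt.filter (fun b => ∀ c ∈ s, ¬ G.Adj b c) with hT
    obtain ⟨c, hcC, hcT⟩ := avg_step G x Ct T hCt
      (fun b hb => hdeg b (Finset.mem_of_mem_filter b hb))
    refine ⟨insert c s, Finset.insert_subset hcC hs, ?_, ?_⟩
    · exact (Finset.card_insert_le _ _).trans (by omega)
    · have hset : Bt.filter (fun b => ∀ c' ∈ insert c s, ¬ G.Adj b c')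
          = T.filter (fun b => ¬ G.Adj b c) := by
        ext b
        simp only [hT, Finset.mem_filter, Finset.mem_insert]
        constructor
        · rintro ⟨hb, hall⟩
          exact ⟨⟨hb, fun c' hc' => hall c' (Or.inr hc')⟩, hall c (Or.inl rfl)⟩
        · rintro ⟨⟨hb, hall⟩, hnc⟩
          refine ⟨hb, fun c' hc' => ?_⟩
          rcases hc' with rfl | hc'
          · exact hnc
          · exact hall c' hc'
      rw [hset]
      have hsplit : (T.filter (fun b => ¬ G.Adj b c)).card
          = T.card - (T.filter (fun b => G.Adj b c)).card := by
        have := Finset.card_filter_add_card_filter_not (s := T)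
          (p := fun b => G.Adj b c)
        omega
      have hle : ((T.filter (fun b => ¬ G.Adj b c)).card : ℝ) ≤ (1 - x) * T.card := by
        have h1 : ((T.filter (fun b => G.Adj b c)).card : ℝ) ≤ T.card := by
          exact_mod_cast Finset.card_le_card (Finset.filter_subset _ _)
        have h2 : ((T.filter (fun b => ¬ G.Adj b c)).card : ℝ)
            = (T.card : ℝ) - (T.filter (fun b => G.Adj b c)).card := by
          rw [hsplit]
          have : (T.filter (fun b => G.Adj b c)).card ≤ T.card :=
            Finset.card_le_card (Finset.filter_subset _ _)
          push_cast [Nat.cast_sub this]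
          ring
        rw [h2]; linarith
      calc ((T.filter (fun b => ¬ G.Adj b c)).card : ℝ)
          ≤ (1 - x) * T.card := hle
        _ ≤ (1 - x) * ((1 - x) ^ n * Bt.card) := by
            apply mul_le_mul_of_nonneg_left hbound (by linarith)
        _ = (1 - x) ^ (n + 1) * Bt.card := by ring

theorem stmt_15 (k : ℕ) (hk : 0 < k) (x : ℝ) (hx : x ∈ Set.Ioc (0:ℝ) 1)
    (h : (1 - x) ^ k < x)
    {V : Type} [Fintype V] (G : SimpleGraph V) (A B C : Set V)
    (hG : Constrained G x x A B C) :
    ∃ v ∈ C, (A.ncard : ℝ) / k ≤ (n2card G v A : ℝ) := by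
  classical
  obtain ⟨⟨hA, hB, hC, hAB, hAC, hBC, hUniv, hSA, hSB, hSC⟩, hdegA, hdegB, hnoAC⟩ := hG
  obtain ⟨hx0, hx1⟩ := hx
  by_contra hcon
  push_neg at hcon
  set Bt := (Set.toFinite B).toFinset with hBtdef
  set Ct := (Set.toFinite C).toFinset with hCtdef
  have hmemB : ∀ b, b ∈ Bt ↔ b ∈ B := fun b => Set.Finite.mem_toFinset _
  have hmemC : ∀ c, c ∈ Ct ↔ c ∈ C := fun c => Set.Finite.mem_toFinset _
  have hBcard : B.ncard = Bt.card := Set.ncard_eq_toFinset_card _ _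
  have hCcard : C.ncard = Ct.card := Set.ncard_eq_toFinset_card _ _
  have hCtne : Ct.Nonempty := ⟨hC.choose, (hmemC _).2 hC.choose_spec⟩
  have hBtpos : 0 < Bt.card := Finset.card_pos.2 ⟨hB.choose, (hmemB _).2 hB.choose_spec⟩
  -- degrees from B into C, Finset form
  have hdegBC : ∀ b ∈ Bt, x * (Ct.card : ℝ) ≤ ((Ct.filter (fun c => G.Adj b c)).card : ℝ) := by
    intro b hb
    have hd := hdegB b ((hmemB b).1 hb)
    have hset : (C ∩ G.neighborSet b) = ↑(Ct.filter (fun c => G.Adj b c)) := by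
      ext c
      simp [hmemC, SimpleGraph.mem_neighborSet]
    have : (nbrCard G b C : ℝ) = ((Ct.filter (fun c => G.Adj b c)).card : ℝ) := by
      unfold nbrCard
      rw [hset, Set.ncard_coe_finset]
    rw [this, hCcard] at hd
    exact hd
  obtain ⟨s, hsC, hscard, hsbound⟩ := greedy_cover G x hx1 Bt Ct hCtne hdegBC k
  set T := Bt.filter (fun b => ∀ c ∈ s, ¬ G.Adj b c) with hTdef
  have hTlt : (T.card : ℝ) < x * Bt.card := by
    have hsbound' : (T.card : ℝ) ≤ (1 - x) ^ k * Bt.card := by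
      rw [hTdef]
      convert hsbound using 4
    refine lt_of_le_of_lt hsbound' ?_
    exact mul_lt_mul_of_pos_right h (by exact_mod_cast hBtpos)
  -- every a ∈ A is in some N2(c) ∩ A, c ∈ s
  have hcover : ∀ a ∈ A, ∃ c ∈ s, a ∈ N2 G c ∩ A := by
    intro a ha
    have hd := hdegA a ha
    set Na := Bt.filter (fun b => G.Adj a b) with hNadef
    have hNa : x * (Bt.card : ℝ) ≤ (Na.card : ℝ) := by
      have hset : (B ∩ G.neighborSet a) = ↑Na := by
        ext b
        simp [hNadef, hmemB, SimpleGraph.mem_neighborSet]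
      have : (nbrCard G a B : ℝ) = (Na.card : ℝ) := by
        unfold nbrCard
        rw [hset, Set.ncard_coe_finset]
      rw [this, hBcard] at hd
      exact hd
    have hnotsub : ¬ (Na ⊆ T) := by
      intro hsub
      have : (Na.card : ℝ) ≤ (T.card : ℝ) := by
        exact_mod_cast Finset.card_le_card hsub
      linarith
    obtain ⟨b, hbNa, hbT⟩ := Finset.not_subset.1 hnotsub
    have hbBt : b ∈ Bt := Finset.mem_of_mem_filter b hbNa
    have hab : G.Adj a b := (Finset.mem_filter.1 hbNa).2
    have : ¬ (∀ c ∈ s, ¬ G.Adj b c) := by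
      intro hall
      exact hbT (Finset.mem_filter.2 ⟨hbBt, hall⟩)
    push_neg at this
    obtain ⟨c, hcs, hbc⟩ := this
    have hcC : c ∈ C := (hmemC c).1 (hsC hcs)
    refine ⟨c, hcs, ⟨?_, ?_, b, hbc.symm, hab.symm⟩, ha⟩
    · intro hca
      exact hnoAC a ha c hcC hca.symm
    · intro hca
      exact (Set.disjoint_left.1 hAC) ha (hca ▸ hcC)
  -- pigeonhole
  have hAne := hA
  obtain ⟨a0, ha0⟩ := hAne
  obtain ⟨c0, hc0s, _⟩ := hcover a0 ha0
  have hsne : s.Nonempty := ⟨c0, hc0s⟩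
  set At := (Set.toFinite A).toFinset with hAtdef
  have hAcard : A.ncard = At.card := Set.ncard_eq_toFinset_card _ _
  have hsub : At ⊆ s.biUnion (fun c => (Set.toFinite (N2 G c ∩ A)).toFinset) := by
    intro a ha
    have haA : a ∈ A := (Set.Finite.mem_toFinset _).1 ha
    obtain ⟨c, hcs, hmem⟩ := hcover a haA
    exact Finset.mem_biUnion.2 ⟨c, hcs, (Set.Finite.mem_toFinset _).2 hmem⟩
  have hAle : (At.card : ℝ) ≤ ∑ c ∈ s, ((n2card G c A : ℝ)) := by
    have h1 : At.card ≤ ∑ c ∈ s, ((Set.toFinite (N2 G c ∩ A)).toFinset).card :=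
      (Finset.card_le_card hsub).trans (Finset.card_biUnion_le)
    have h2 : ∀ c, n2card G c A = ((Set.toFinite (N2 G c ∩ A)).toFinset).card := fun c =>
      Set.ncard_eq_toFinset_card _ _
    calc (At.card : ℝ) ≤ ((∑ c ∈ s, ((Set.toFinite (N2 G c ∩ A)).toFinset).card : ℕ) : ℝ) := by
          exact_mod_cast h1
      _ = ∑ c ∈ s, ((n2card G c A : ℝ)) := by
          push_cast
          exact Finset.sum_congr rfl (fun c _ => by rw [h2 c])
  have hsum_lt : ∑ c ∈ s, ((n2card G c A : ℝ)) < (s.card : ℝ) * ((A.ncard : ℝ) / k) := by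
    have := Finset.sum_lt_sum_of_nonempty hsne
      (f := fun c => ((n2card G c A : ℝ))) (g := fun _ => (A.ncard : ℝ) / k)
      (fun c hcs => hcon c ((hmemC c).1 (hsC hcs)))
    rwa [Finset.sum_const, nsmul_eq_mul] at this
  have hq : (0:ℝ) ≤ (A.ncard : ℝ) / k := by positivity
  have hsk : (s.card : ℝ) * ((A.ncard : ℝ) / k) ≤ (k : ℝ) * ((A.ncard : ℝ) / k) :=
    mul_le_mul_of_nonneg_right (by exact_mod_cast hscard) hq
  have hkne : (k : ℝ) ≠ 0 := Nat.cast_ne_zero.2 hk.ne'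
  have hfin : (k : ℝ) * ((A.ncard : ℝ) / k) = (A.ncard : ℝ) := by
    field_simp
  have hAcast : (A.ncard : ℝ) = (At.card : ℝ) := by exact_mod_cast hAcard
  linarith
end

section
/- Let k ≥ 1 be an integer and let x ∈ (0,1] with x ≥ 1/k − 1/(13k³). Then every graph G that is (x,x)-constrained via a tripartition (A,B,C) contains a vertex v ∈ C with |N²_A(v)| ≥ |A|/k. (That is, φ(x,x) ≥ 1/k.) -/
open Set

open scoped Classical

namespace Stmt16Aux

/-- neighbours of `v` inside the finset `S` -/
noncomputable def nbF {V : Type} (G : SimpleGraph V) (S : Finset V) (v : V) : Finset V :=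
  S.filter (fun b => G.Adj v b)

/-- `a` and `c` joined by a path of length two through `S` -/
def relF {V : Type} (G : SimpleGraph V) (S : Finset V) (a c : V) : Prop :=
  ∃ b ∈ S, G.Adj a b ∧ G.Adj b c

lemma swap_sum {V : Type} (s t : Finset V) (R : V → V → Prop) :
    ∑ a ∈ s, (t.filter (fun b => R a b)).card
      = ∑ b ∈ t, (s.filter (fun a => R a b)).card := by
  simp only [Finset.card_filter]
  exact Finset.sum_comm

lemma arith1 (K x : ℝ) (hK : 1 ≤ K) (hx : 1/K - 1/(13*K^3) ≤ x) (hx1 : x ≤ 1) :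
    (1 - x) * (x + 1/(2*K^2)) < K * x^2 := by
  have hK0 : (0:ℝ) < K := lt_of_lt_of_le one_pos hK
  have hK2 : (1:ℝ) ≤ K^2 := by nlinarith
  have e : (13*K^3) * (1/K - 1/(13*K^3)) = 13*K^2 - 1 := by field_simp
  have h' : 13*K^2 - 1 ≤ 13*K^3 * x := by
    calc 13*K^2 - 1 = (13*K^3) * (1/K - 1/(13*K^3)) := e.symm
    _ ≤ 13*K^3 * x := by
        apply mul_le_mul_of_nonneg_left hx; positivity
  have hx0 : 0 < x := by
    by_contra hc
    push_neg at hc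
    have : 13*K^3 * x ≤ 0 := mul_nonpos_of_nonneg_of_nonpos (by positivity) hc
    linarith
  have key : (1 - x) * (2*K^2*x + 1) < 2*K^2*(K*x^2) := by
    rcases le_or_gt 1 (K*x) with hy | hy
    · nlinarith [mul_pos hK0 hx0, sq_nonneg (K*x), mul_nonneg (mul_nonneg hK0.le hK0.le) hx0.le]
    · nlinarith [sq_nonneg (13*K*x - 12), mul_pos (mul_pos hK0 hK0) hx0, mul_pos hK0 hx0]
  have h2 : (0:ℝ) < 2*K^2 := by positivity
  have hKne : (K:ℝ) ≠ 0 := ne_of_gt hK0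
  have e2 : (1 - x) * (x + 1/(2*K^2)) = ((1-x)*(2*K^2*x+1))/(2*K^2) := by
    field_simp
  rw [e2, div_lt_iff₀ h2]
  nlinarith [key]

end Stmt16Aux

open Stmt16Aux

set_option maxHeartbeats 1000000 in
theorem stmt_16 (k : ℕ) (hk : 1 ≤ k) (x : ℝ) (hx : x ∈ Set.Ioc (0:ℝ) 1)
    (h : 1 / (k : ℝ) - 1 / (13 * (k : ℝ) ^ 3) ≤ x)
    {V : Type} [Fintype V] (G : SimpleGraph V) (A B C : Set V)
    (hG : Constrained G x x A B C) :
    ∃ v ∈ C, (A.ncard : ℝ) / k ≤ (n2card G v A : ℝ) := by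
  classical
  obtain ⟨hx0, hx1⟩ := hx
  obtain ⟨hTri, hAB, hBC, hACe⟩ := hG
  obtain ⟨hA, hB, hC, hdAB, hdAC, hdBC, -, -, -, -⟩ := hTri
  by_contra hcon
  push_neg at hcon
  set FA := A.toFinset with hFAdef
  set FB := B.toFinset with hFBdef
  set FC := C.toFinset with hFCdef
  set m := FA.card with hmdef
  set n := FB.card with hndef
  set p := FC.card with hpdef
  set K : ℝ := (k:ℝ) with hKdef
  have hK1 : (1:ℝ) ≤ K := by rw [hKdef]; exact_mod_cast hk
  have hK0 : (0:ℝ) < K := lt_of_lt_of_le one_pos hK1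
  have hmA : A.ncard = m := by
    rw [hmdef, ← Set.ncard_coe_finset FA, hFAdef, Set.coe_toFinset]
  have hnB : B.ncard = n := by
    rw [hndef, ← Set.ncard_coe_finset FB, hFBdef, Set.coe_toFinset]
  have hpC : C.ncard = p := by
    rw [hpdef, ← Set.ncard_coe_finset FC, hFCdef, Set.coe_toFinset]
  have hm1 : 1 ≤ m := Finset.card_pos.mpr (Set.toFinset_nonempty.mpr hA)
  have hn1 : 1 ≤ n := Finset.card_pos.mpr (Set.toFinset_nonempty.mpr hB)
  have hp1 : 1 ≤ p := Finset.card_pos.mpr (Set.toFinset_nonempty.mpr hC)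
  have hm0 : (0:ℝ) < m := by exact_mod_cast hm1
  have hn0 : (0:ℝ) < n := by exact_mod_cast hn1
  have hp0 : (0:ℝ) < p := by exact_mod_cast hp1
  -- bridge : nbrCard = card of filter
  have hnbr : ∀ (v : V) (S : Set V), nbrCard G v S = (S.toFinset.filter (fun u => G.Adj v u)).card := by
    intro v S
    rw [nbrCard, ← Set.ncard_coe_finset]
    congr 1
    ext u
    simp [Set.mem_toFinset, SimpleGraph.mem_neighborSet]
  -- degree conditions in Finset form
  have hdegB : ∀ a ∈ FA, x * n ≤ ((nbF G FB a).card : ℝ) := by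
    intro a ha
    have h1 := hAB a (Set.mem_toFinset.mp ha)
    rw [hnB, hnbr] at h1
    exact h1
  have hdegC : ∀ b ∈ FB, x * p ≤ ((nbF G FC b).card : ℝ) := by
    intro b hb
    have h1 := hBC b (Set.mem_toFinset.mp hb)
    rw [hpC, hnbr] at h1
    exact h1
  -- `relF G FB a c` with a ∈ A, c ∈ C implies a ∈ N2 G c ∩ A
  have hAcLT : ∀ c ∈ FC, ((FA.filter (fun a => relF G FB a c)).card : ℝ) < m / K := by
    intro c hc
    have hsub : (↑(FA.filter (fun a => relF G FB a c)) : Set V) ⊆ N2 G c ∩ A := by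
      intro a ha
      simp only [Finset.coe_filter, Set.mem_setOf_eq] at ha
      obtain ⟨haA, b, hbB, hab, hbc⟩ := ha
      have haA' : a ∈ A := Set.mem_toFinset.mp haA
      have hcC : c ∈ C := Set.mem_toFinset.mp hc
      refine ⟨⟨?_, ?_, b, hbc.symm, hab.symm⟩, haA'⟩
      · intro hadj
        exact hACe a haA' c hcC hadj.symm
      · intro hce
        exact absurd (hdAC.ne_of_mem haA' hcC) (by rw [hce]; exact fun h' => h' rfl)
    have hle : (FA.filter (fun a => relF G FB a c)).card ≤ n2card G c A := by
      rw [n2card, ← Set.ncard_coe_finset]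
      exact Set.ncard_le_ncard hsub (Set.toFinite _)
    have := hcon c (Set.mem_toFinset.mp hc)
    rw [hmA] at this
    calc ((FA.filter (fun a => relF G FB a c)).card : ℝ) ≤ (n2card G c A : ℝ) := by exact_mod_cast hle
    _ < m / K := this
  -- lower bound on |C_a|
  have hCaLB : ∀ a ∈ FA, x * p ≤ ((FC.filter (fun c => relF G FB a c)).card : ℝ) := by
    intro a ha
    have hnbne : (nbF G FB a).Nonempty := by
      rw [← Finset.card_pos]
      by_contra he
      push_neg at he
      have h0 : (nbF G FB a).card = 0 := Nat.le_zero.mp he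
      have hd := hdegB a ha
      rw [h0] at hd
      push_cast at hd
      nlinarith [mul_pos hx0 hn0]
    obtain ⟨b, hb⟩ := hnbne
    have hbB : b ∈ FB := (Finset.mem_filter.mp hb).1
    have hab : G.Adj a b := (Finset.mem_filter.mp hb).2
    have hsub : nbF G FC b ⊆ FC.filter (fun c => relF G FB a c) := by
      intro c hcmem
      obtain ⟨hcC, hbc⟩ := Finset.mem_filter.mp hcmem
      exact Finset.mem_filter.mpr ⟨hcC, ⟨b, hbB, hab, hbc⟩⟩
    calc x * p ≤ ((nbF G FC b).card : ℝ) := hdegC b hbB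
    _ ≤ _ := by exact_mod_cast Finset.card_le_card hsub

  -- parameters
  set t : ℝ := 1/(2*K^2) with htdef
  have ht0 : (0:ℝ) < t := by rw [htdef]; positivity
  have hxt0 : (0:ℝ) < x + t := add_pos hx0 ht0
  set g : ℝ := x^2 * n / (x + t) with hgdef
  have hg0 : (0:ℝ) ≤ g := by
    rw [hgdef]
    exact div_nonneg (mul_nonneg (pow_nonneg hx0.le 2) hn0.le) hxt0.le
  -- the set of "bad" vertices of A
  set Bad := FA.filter (fun a => (x + t)*p < ((FC.filter (fun c => relF G FB a c)).card : ℝ))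
    with hBaddef
  have hBadsub : Bad ⊆ FA := Finset.filter_subset _ _
  have hFCne : FC.Nonempty := Set.toFinset_nonempty.mpr hC
  have hFAne : FA.Nonempty := Set.toFinset_nonempty.mpr hA
  have hswapR : (∑ a ∈ FA, ((FC.filter (fun c => relF G FB a c)).card : ℝ))
      = ∑ c ∈ FC, ((FA.filter (fun a => relF G FB a c)).card : ℝ) := by
    exact_mod_cast congrArg (Nat.cast : ℕ → ℝ) (swap_sum FA FC (relF G FB))
  have hsumlt : (∑ c ∈ FC, ((FA.filter (fun a => relF G FB a c)).card : ℝ)) < p * (m / K) := by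
    have h1 := Finset.sum_lt_sum_of_nonempty hFCne hAcLT
    rwa [Finset.sum_const, nsmul_eq_mul] at h1
  have hBadlt : (Bad.card : ℝ) * (t*p) < p*m*(1/(13*K^3)) := by
    have hlb : ∀ a ∈ Bad, t * p ≤ ((FC.filter (fun c => relF G FB a c)).card : ℝ) - x * p := by
      intro a ha
      have := (Finset.mem_filter.mp ha).2
      linarith
    have step1 : (Bad.card:ℝ) * (t*p)
        ≤ ∑ a ∈ FA, (((FC.filter (fun c => relF G FB a c)).card : ℝ) - x * p) := by
      calc (Bad.card:ℝ) * (t*p) = ∑ _a ∈ Bad, (t*p) := by rw [Finset.sum_const, nsmul_eq_mul]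
      _ ≤ ∑ a ∈ Bad, (((FC.filter (fun c => relF G FB a c)).card : ℝ) - x * p) :=
          Finset.sum_le_sum hlb
      _ ≤ _ := by
          apply Finset.sum_le_sum_of_subset_of_nonneg hBadsub
          intro a ha _
          have := hCaLB a ha
          linarith
    have step2 : ∑ a ∈ FA, (((FC.filter (fun c => relF G FB a c)).card : ℝ) - x * p)
        < p*(m/K) - x*p*m := by
      rw [Finset.sum_sub_distrib, Finset.sum_const, nsmul_eq_mul, hswapR]
      have : (m:ℝ) * (x*p) = x*p*m := by ring
      rw [this]
      linarith [hsumlt]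
    have step3 : p*(m/K) - x*p*m ≤ p*m*(1/(13*K^3)) := by
      have hKx : 1/K - x ≤ 1/(13*K^3) := by
        have : 1/K - 1/(13*K^3) ≤ x := h
        linarith
      have e : p*(m/K) - x*p*m = (p*m)*(1/K - x) := by ring
      rw [e]
      have := mul_le_mul_of_nonneg_left hKx (mul_nonneg hp0.le hm0.le)
      calc ((p:ℝ)*m)*(1/K - x) ≤ (p:ℝ)*m*(1/(13*K^3)) := this
      _ = p*m*(1/(13*K^3)) := by ring
    linarith
  have hBadK : K * (Bad.card:ℝ) < m := by
    have e1 : (Bad.card:ℝ) * (t*p) = ((Bad.card:ℝ)*p)/(2*K^2) := by rw [htdef]; ring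
    have e2 : (p:ℝ)*m*(1/(13*K^3)) = ((p:ℝ)*m)/(13*K^3) := by ring
    rw [e1, e2, div_lt_div_iff₀ (by positivity) (by positivity)] at hBadlt
    have h13 : (0:ℝ) < 13*K^2*p := mul_pos (by positivity : (0:ℝ) < 13*K^2) hp0
    have hmain : (13*K^2*(p:ℝ)) * (K*(Bad.card:ℝ)) < (13*K^2*(p:ℝ)) * m := by
      nlinarith [hBadlt, mul_nonneg (mul_nonneg (sq_nonneg K) hp0.le) hm0.le]
    exact lt_of_mul_lt_mul_left hmain h13.le
  -- step lemma: for a good vertex a there is c with large coverage of B_a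
  have hstep : ∀ a ∈ FA, ((FC.filter (fun c => relF G FB a c)).card : ℝ) ≤ (x+t)*p →
      ∃ c ∈ FC.filter (fun c => relF G FB a c),
        g ≤ (((nbF G FB a).filter (fun b => G.Adj b c)).card : ℝ) := by
    intro a ha hgood
    by_contra hno
    push_neg at hno
    have hsum1 : ∑ c ∈ FC.filter (fun c => relF G FB a c),
          ((nbF G FB a).filter (fun b => G.Adj b c)).card
        = ∑ b ∈ nbF G FB a,
          ((FC.filter (fun c => relF G FB a c)).filter (fun c => G.Adj b c)).card :=
      swap_sum _ _ (fun c b => G.Adj b c)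
    have hinner : ∀ b ∈ nbF G FB a,
        (FC.filter (fun c => relF G FB a c)).filter (fun c => G.Adj b c) = nbF G FC b := by
      intro b hb
      obtain ⟨hbB, hab⟩ := Finset.mem_filter.mp hb
      ext c
      simp only [Finset.mem_filter, nbF]
      constructor
      · rintro ⟨⟨hc, -⟩, hbc⟩
        exact ⟨hc, hbc⟩
      · rintro ⟨hc, hbc⟩
        exact ⟨⟨hc, ⟨b, hbB, hab, hbc⟩⟩, hbc⟩
    have hsumR : (∑ c ∈ FC.filter (fun c => relF G FB a c),
          (((nbF G FB a).filter (fun b => G.Adj b c)).card : ℝ))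
        = ∑ b ∈ nbF G FB a, ((nbF G FC b).card : ℝ) := by
      exact_mod_cast congrArg (Nat.cast : ℕ → ℝ)
        (hsum1.trans (Finset.sum_congr rfl (fun b hb => by rw [hinner b hb])))
    have hlow : x*p*(x*n) ≤ ∑ c ∈ FC.filter (fun c => relF G FB a c),
        (((nbF G FB a).filter (fun b => G.Adj b c)).card : ℝ) := by
      rw [hsumR]
      have h1 : ((nbF G FB a).card : ℝ) * (x*p) ≤ ∑ b ∈ nbF G FB a, ((nbF G FC b).card : ℝ) := by
        have := Finset.card_nsmul_le_sum (nbF G FB a)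
          (fun b => ((nbF G FC b).card : ℝ)) (x*p) (fun b hb => hdegC b (Finset.mem_filter.mp hb).1)
        rwa [nsmul_eq_mul] at this
      have h2 : x*p*(x*n) ≤ ((nbF G FB a).card : ℝ) * (x*p) := by
        have := hdegB a ha
        nlinarith [mul_pos hx0 hp0]
      linarith
    have hCane : (FC.filter (fun c => relF G FB a c)).Nonempty := by
      rw [← Finset.card_pos]
      by_contra he
      push_neg at he
      have h0 : (FC.filter (fun c => relF G FB a c)).card = 0 := Nat.le_zero.mp he
      have := hCaLB a ha
      rw [h0] at this
      push_cast at this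
      nlinarith [mul_pos hx0 hp0]
    have hup : (∑ c ∈ FC.filter (fun c => relF G FB a c),
          (((nbF G FB a).filter (fun b => G.Adj b c)).card : ℝ))
        < ((FC.filter (fun c => relF G FB a c)).card : ℝ) * g := by
      have h1 := Finset.sum_lt_sum_of_nonempty hCane hno
      rwa [Finset.sum_const, nsmul_eq_mul] at h1
    have hle2 : ((FC.filter (fun c => relF G FB a c)).card : ℝ) * g ≤ (x+t)*p*g :=
      mul_le_mul_of_nonneg_right hgood hg0
    have heq : (x+t)*p*g = x*p*(x*n) := by
      rw [hgdef]
      have hne : x + t ≠ 0 := ne_of_gt hxt0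
      field_simp
    linarith
  -- bound on the number of covered vertices
  have hcovbound : ∀ T : Finset V, T ⊆ FC →
      ((FA.filter (fun a => ¬ ∀ c ∈ T, ¬ relF G FB a c)).card : ℝ) ≤ T.card * (m/K) := by
    intro T hTC
    have hsub : FA.filter (fun a => ¬ ∀ c ∈ T, ¬ relF G FB a c)
        ⊆ T.biUnion (fun c => FA.filter (fun a => relF G FB a c)) := by
      intro a ha
      obtain ⟨haA, hne⟩ := Finset.mem_filter.mp ha
      push_neg at hne
      obtain ⟨c, hcT, hrel⟩ := hne
      exact Finset.mem_biUnion.mpr ⟨c, hcT, Finset.mem_filter.mpr ⟨haA, hrel⟩⟩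
    calc ((FA.filter (fun a => ¬ ∀ c ∈ T, ¬ relF G FB a c)).card : ℝ)
        ≤ ((T.biUnion (fun c => FA.filter (fun a => relF G FB a c))).card : ℝ) := by
          exact_mod_cast Finset.card_le_card hsub
    _ ≤ ∑ c ∈ T, ((FA.filter (fun a => relF G FB a c)).card : ℝ) := by
          exact_mod_cast Finset.card_biUnion_le
    _ ≤ ∑ _c ∈ T, (m/K) := Finset.sum_le_sum (fun c hc => le_of_lt (hAcLT c (hTC hc)))
    _ = T.card * (m/K) := by rw [Finset.sum_const, nsmul_eq_mul]
  -- main induction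
  have main : ∀ i : ℕ, i ≤ k →
      ∃ T : Finset V, T ⊆ FC ∧ T.card ≤ i ∧
        ((∀ a ∈ FA, ∃ c ∈ T, relF G FB a c) ∨
          (T.card = i ∧ (((FB \ T.biUnion (fun c => nbF G FB c)).card : ℝ) ≤ (n:ℝ) - i * g))) := by
    intro i
    induction i with
    | zero =>
      intro _
      refine ⟨∅, Finset.empty_subset _, le_refl _, Or.inr ⟨rfl, ?_⟩⟩
      simp [hndef]
    | succ i ih =>
      intro hik
      obtain ⟨T, hTC, hTcard, hT⟩ := ih (Nat.le_of_succ_le hik)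
      rcases hT with hcov | ⟨hTi, hU⟩
      · exact ⟨T, hTC, le_trans hTcard (Nat.le_succ i), Or.inl hcov⟩
      by_cases hallcov : ∀ a ∈ FA, ∃ c ∈ T, relF G FB a c
      · exact ⟨T, hTC, le_trans hTcard (Nat.le_succ i), Or.inl hallcov⟩
      -- there is an uncovered good vertex
      have hiK : (i:ℝ) ≤ K - 1 := by
        have : (i:ℝ) + 1 ≤ K := by
          rw [hKdef]
          exact_mod_cast hik
        linarith
      have hsplit := Finset.card_filter_add_card_filter_not
        (s := FA) (p := fun a => ∀ c ∈ T, ¬ relF G FB a c)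
      have hUncLB : (m:ℝ)/K ≤ ((FA.filter (fun a => ∀ c ∈ T, ¬ relF G FB a c)).card : ℝ) := by
        have hcb := hcovbound T hTC
        have hcb2 : ((FA.filter (fun a => ¬ ∀ c ∈ T, ¬ relF G FB a c)).card : ℝ)
            ≤ (K-1) * (m/K) := by
          have hTcR : (T.card : ℝ) ≤ (i:ℝ) := by exact_mod_cast hTcard
          have hmK0 : (0:ℝ) ≤ m/K := div_nonneg hm0.le hK0.le
          calc ((FA.filter (fun a => ¬ ∀ c ∈ T, ¬ relF G FB a c)).card : ℝ)
              ≤ T.card * (m/K) := hcb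
          _ ≤ (K-1) * (m/K) := by
              apply mul_le_mul_of_nonneg_right _ hmK0
              linarith
        have hsum : ((FA.filter (fun a => ∀ c ∈ T, ¬ relF G FB a c)).card : ℝ)
            + ((FA.filter (fun a => ¬ ∀ c ∈ T, ¬ relF G FB a c)).card : ℝ) = (m:ℝ) := by
          exact_mod_cast congrArg (Nat.cast : ℕ → ℝ) hsplit
        have e : (m:ℝ) - (K-1)*(m/K) = m/K := by field_simp; ring
        linarith
      have hBadlt2 : (Bad.card : ℝ) < ((FA.filter (fun a => ∀ c ∈ T, ¬ relF G FB a c)).card : ℝ) := by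
        have : (Bad.card:ℝ) < m/K := by
          rw [lt_div_iff₀ hK0]
          nlinarith [hBadK]
        linarith
      have hex : ∃ a ∈ FA.filter (fun a => ∀ c ∈ T, ¬ relF G FB a c), a ∉ Bad := by
        by_contra hco
        push_neg at hco
        have hsub2 : FA.filter (fun a => ∀ c ∈ T, ¬ relF G FB a c) ⊆ Bad := hco
        have := Finset.card_le_card hsub2
        have : ((FA.filter (fun a => ∀ c ∈ T, ¬ relF G FB a c)).card : ℝ) ≤ (Bad.card : ℝ) := by
          exact_mod_cast this
        linarith
      obtain ⟨a, haUnc, haGood⟩ := hex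
      obtain ⟨haA, hnotrel⟩ := Finset.mem_filter.mp haUnc
      have hgood : ((FC.filter (fun c => relF G FB a c)).card : ℝ) ≤ (x+t)*p := by
        by_contra hbad
        push_neg at hbad
        exact haGood (Finset.mem_filter.mpr ⟨haA, hbad⟩)
      obtain ⟨c, hcCa, hgW⟩ := hstep a haA hgood
      obtain ⟨hcC, hrel⟩ := Finset.mem_filter.mp hcCa
      have hcT : c ∉ T := fun hcT => hnotrel c hcT hrel
      refine ⟨insert c T, ?_, ?_, Or.inr ⟨?_, ?_⟩⟩
      · intro c' hc'
        rcases Finset.mem_insert.mp hc' with rfl | hc'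
        · exact hcC
        · exact hTC hc'
      · rw [Finset.card_insert_of_notMem hcT, hTi]
      · rw [Finset.card_insert_of_notMem hcT, hTi]
      · -- cardinality of the new uncovered part of B
        have hWsubNb : (nbF G FB a).filter (fun b => G.Adj b c) ⊆ nbF G FB a :=
          Finset.filter_subset _ _
        have hNbU : nbF G FB a ⊆ FB \ T.biUnion (fun c => nbF G FB c) := by
          intro b hb
          obtain ⟨hbB, hab⟩ := Finset.mem_filter.mp hb
          rw [Finset.mem_sdiff]
          refine ⟨hbB, ?_⟩
          intro hbU
          obtain ⟨c', hc'T, hbc'⟩ := Finset.mem_biUnion.mp hbU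
          obtain ⟨-, hc'b⟩ := Finset.mem_filter.mp hbc'
          exact hnotrel c' hc'T ⟨b, hbB, hab, hc'b.symm⟩
        have hWsubU : (nbF G FB a).filter (fun b => G.Adj b c)
            ⊆ FB \ T.biUnion (fun c => nbF G FB c) :=
          subset_trans hWsubNb hNbU
        have hUsub : FB \ (insert c T).biUnion (fun c => nbF G FB c)
            ⊆ (FB \ T.biUnion (fun c => nbF G FB c))
              \ ((nbF G FB a).filter (fun b => G.Adj b c)) := by
          intro b hb
          obtain ⟨hbB, hbU⟩ := Finset.mem_sdiff.mp hb
          rw [Finset.mem_sdiff, Finset.mem_sdiff]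
          refine ⟨⟨hbB, ?_⟩, ?_⟩
          · intro hbT
            obtain ⟨c', hc'T, hbc'⟩ := Finset.mem_biUnion.mp hbT
            exact hbU (Finset.mem_biUnion.mpr ⟨c', Finset.mem_insert_of_mem hc'T, hbc'⟩)
          · intro hbW
            obtain ⟨hbNa, hbc⟩ := Finset.mem_filter.mp hbW
            have hbNb : b ∈ nbF G FB c := Finset.mem_filter.mpr ⟨hbB, hbc.symm⟩
            exact hbU (Finset.mem_biUnion.mpr ⟨c, Finset.mem_insert_self c T, hbNb⟩)
        have hcard1 : ((FB \ (insert c T).biUnion (fun c => nbF G FB c)).card : ℝ)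
            ≤ ((FB \ T.biUnion (fun c => nbF G FB c)).card : ℝ)
              - (((nbF G FB a).filter (fun b => G.Adj b c)).card : ℝ) := by
          have h1 := Finset.card_le_card hUsub
          have h2 := Finset.card_sdiff_of_subset hWsubU
          have h3 : (((nbF G FB a).filter (fun b => G.Adj b c)).card : ℕ)
              ≤ (FB \ T.biUnion (fun c => nbF G FB c)).card := Finset.card_le_card hWsubU
          rw [h2] at h1
          have := (Nat.cast_le (α := ℝ)).mpr h1
          rwa [Nat.cast_sub h3] at this
        have hle : ((FB \ (insert c T).biUnion (fun c => nbF G FB c)).card : ℝ)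
            ≤ (n:ℝ) - i*g - g := by
          linarith
        have : ((i:ℕ)+1 : ℝ) * g = (i:ℝ)*g + g := by push_cast; ring
        push_cast
        push_cast at hle
        linarith
  -- extract conclusion
  obtain ⟨T, hTC, hTcard, hT⟩ := main k (le_refl k)
  have hcovAll : ∀ a ∈ FA, ∃ c ∈ T, relF G FB a c := by
    rcases hT with hcov | ⟨hTk, hU⟩
    · exact hcov
    intro a ha
    by_contra hno
    push_neg at hno
    have hNbU : nbF G FB a ⊆ FB \ T.biUnion (fun c => nbF G FB c) := by
      intro b hb
      obtain ⟨hbB, hab⟩ := Finset.mem_filter.mp hb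
      rw [Finset.mem_sdiff]
      refine ⟨hbB, ?_⟩
      intro hbU
      obtain ⟨c', hc'T, hbc'⟩ := Finset.mem_biUnion.mp hbU
      obtain ⟨-, hc'b⟩ := Finset.mem_filter.mp hbc'
      exact hno c' hc'T ⟨b, hbB, hab, hc'b.symm⟩
    have h1 : x*n ≤ ((FB \ T.biUnion (fun c => nbF G FB c)).card : ℝ) := by
      calc x*n ≤ ((nbF G FB a).card : ℝ) := hdegB a ha
      _ ≤ _ := by exact_mod_cast Finset.card_le_card hNbU
    have harith : (n:ℝ) - K * g < x*n := by
      have ha1 : (1-x)*(x+t) < K*x^2 := by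
        rw [htdef]
        exact arith1 K x hK1 h hx1
      have h2 : ((1-x)*(x+t))*(n:ℝ) < (K*x^2)*(n:ℝ) :=
        mul_lt_mul_of_pos_right ha1 hn0
      have h3 : (1-x)*(n:ℝ) < K*g := by
        rw [hgdef, ← mul_div_assoc, lt_div_iff₀ hxt0]
        nlinarith [h2]
      linarith
    rw [show ((k:ℕ):ℝ) = K from hKdef.symm] at hU
    linarith
  have hTne : T.Nonempty := by
    obtain ⟨a0, ha0⟩ := hFAne
    obtain ⟨c, hcT, -⟩ := hcovAll a0 ha0
    exact ⟨c, hcT⟩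
  have hcard : (m:ℝ) ≤ ∑ c ∈ T, ((FA.filter (fun a => relF G FB a c)).card : ℝ) := by
    have hsub : FA ⊆ T.biUnion (fun c => FA.filter (fun a => relF G FB a c)) := by
      intro a ha
      obtain ⟨c, hcT, hrel⟩ := hcovAll a ha
      exact Finset.mem_biUnion.mpr ⟨c, hcT, Finset.mem_filter.mpr ⟨ha, hrel⟩⟩
    calc (m:ℝ) ≤ ((T.biUnion (fun c => FA.filter (fun a => relF G FB a c))).card : ℝ) := by
          exact_mod_cast Finset.card_le_card hsub
    _ ≤ _ := by exact_mod_cast Finset.card_biUnion_le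
  have hlt : ∑ c ∈ T, ((FA.filter (fun a => relF G FB a c)).card : ℝ) < (m:ℝ) := by
    have h1 := Finset.sum_lt_sum_of_nonempty hTne (fun c hc => hAcLT c (hTC hc))
    rw [Finset.sum_const, nsmul_eq_mul] at h1
    have hTk : (T.card : ℝ) ≤ K := by
      rw [hKdef]
      exact_mod_cast hTcard
    have h2 : (T.card:ℝ) * (m/K) ≤ K * (m/K) := by
      apply mul_le_mul_of_nonneg_right hTk (div_nonneg hm0.le hK0.le)
    have h3 : K * ((m:ℝ)/K) = m := by field_simp
    linarith
  linarith
end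

section
/- Let x, y, z ∈ (0,1]. Then (x,y,z) is triangular if and only if there is no graph G that is (x,y)-constrained via a tripartition (A,B,C) such that |N²_A(v)| ≤ (1−z)·|A| for every vertex v ∈ C. (Equivalently, φ(x,y) > 1−z if and only if (x,y,z) is triangular.) -/
open Set

/-- The triple `(x,y,z)` is triangular: no triangle-free graph admits a partition of
its vertex set into three nonempty stable sets `(A,B,C)` such that every vertex in `A`
has at least `x|B|` neighbours in `B`, every vertex in `B` has at least `y|C|`
neighbours in `C`, and every vertex in `C` has at least `z|A|` neighbours in `A`. -/
def Triangular (x y z : ℝ) : Prop :=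
  ¬ ∃ (V : Type) (_ : Fintype V) (G : SimpleGraph V) (A B C : Set V),
      G.CliqueFree 3 ∧ IsTripartition G A B C ∧
      (∀ v ∈ A, x * B.ncard ≤ (nbrCard G v B : ℝ)) ∧
      (∀ v ∈ B, y * C.ncard ≤ (nbrCard G v C : ℝ)) ∧
      (∀ v ∈ C, z * A.ncard ≤ (nbrCard G v A : ℝ))

/-- Augment `G` by joining each vertex of `C` to the vertices of `A` not in its `N²`. -/
def aug {V : Type*} (G : SimpleGraph V) (A C : Set V) : SimpleGraph V where
  Adj u v := u ≠ v ∧ (G.Adj u v ∨ (u ∈ C ∧ v ∈ A ∧ v ∉ N2 G u) ∨ (v ∈ C ∧ u ∈ A ∧ u ∉ N2 G v))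
  symm := by
    refine ⟨?_⟩; rintro u v ⟨hne, h⟩
    refine ⟨hne.symm, ?_⟩
    rcases h with h | h | h
    · exact Or.inl h.symm
    · exact Or.inr (Or.inr h)
    · exact Or.inr (Or.inl h)
  loopless := by refine ⟨?_⟩; rintro u ⟨hne, -⟩; exact hne rfl

lemma aug_adj {V : Type*} (G : SimpleGraph V) (A C : Set V) (u v : V) :
    (aug G A C).Adj u v ↔
      u ≠ v ∧ (G.Adj u v ∨ (u ∈ C ∧ v ∈ A ∧ v ∉ N2 G u) ∨ (v ∈ C ∧ u ∈ A ∧ u ∉ N2 G v)) :=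
  Iff.rfl

/-- Delete all edges between `A` and `C`. -/
def del {V : Type*} (G : SimpleGraph V) (A C : Set V) : SimpleGraph V where
  Adj u v := G.Adj u v ∧ ¬(u ∈ A ∧ v ∈ C) ∧ ¬(u ∈ C ∧ v ∈ A)
  symm := by refine ⟨?_⟩; rintro u v ⟨h, h1, h2⟩; exact ⟨h.symm, fun hh => h2 ⟨hh.2, hh.1⟩, fun hh => h1 ⟨hh.2, hh.1⟩⟩
  loopless := by refine ⟨?_⟩; rintro u ⟨h, -⟩; exact G.irrefl h

lemma del_adj {V : Type*} (G : SimpleGraph V) (A C : Set V) (u v : V) :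
    (del G A C).Adj u v ↔ G.Adj u v ∧ ¬(u ∈ A ∧ v ∈ C) ∧ ¬(u ∈ C ∧ v ∈ A) :=
  Iff.rfl

theorem stmt_19 (x y z : ℝ) (hx : x ∈ Set.Ioc (0:ℝ) 1) (hy : y ∈ Set.Ioc (0:ℝ) 1)
    (hz : z ∈ Set.Ioc (0:ℝ) 1) :
    Triangular x y z ↔
      ¬ ∃ (V : Type) (_ : Fintype V) (G : SimpleGraph V) (A B C : Set V),
          Constrained G x y A B C ∧
          ∀ v ∈ C, (n2card G v A : ℝ) ≤ (1 - z) * A.ncard := by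
  classical
  constructor
  · -- Triangular → no constrained graph with the N² bound
    intro htri
    rintro ⟨V, hV, G, A, B, C,
      ⟨⟨hAne, hBne, hCne, hAB, hAC, hBC, hcover, hSA, hSB, hSC⟩, hdA, hdB, hnoAC⟩, hN2⟩
    apply htri
    set G' := aug G A C with hG'
    -- disjointness as implications
    have hABn : ∀ t, t ∈ A → t ∉ B := fun t ht h => Set.disjoint_left.mp hAB ht h
    have hACn : ∀ t, t ∈ A → t ∉ C := fun t ht h => Set.disjoint_left.mp hAC ht h
    have hBCn : ∀ t, t ∈ B → t ∉ C := fun t ht h => Set.disjoint_left.mp hBC ht h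
    have hmem : ∀ t : V, t ∈ A ∨ t ∈ B ∨ t ∈ C := by
      intro t
      have : t ∈ A ∪ B ∪ C := by rw [hcover]; exact Set.mem_univ t
      rcases this with (h | h) | h
      · exact Or.inl h
      · exact Or.inr (Or.inl h)
      · exact Or.inr (Or.inr h)
    -- stability of the three sets in G'
    have hSA' : StableSet G' A := by
      intro u hu v hv hadj
      rcases (aug_adj G A C u v).mp hadj with ⟨-, h | h | h⟩
      · exact hSA u hu v hv h
      · exact hACn u hu h.1
      · exact hACn v hv h.1
    have hSB' : StableSet G' B := by
      intro u hu v hv hadj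
      rcases (aug_adj G A C u v).mp hadj with ⟨-, h | h | h⟩
      · exact hSB u hu v hv h
      · exact hBCn u hu h.1
      · exact hBCn v hv h.1
    have hSC' : StableSet G' C := by
      intro u hu v hv hadj
      rcases (aug_adj G A C u v).mp hadj with ⟨-, h | h | h⟩
      · exact hSC u hu v hv h
      · exact hACn v h.2.1 hv
      · exact hACn u h.2.1 hu
    -- the key triangle analysis
    have key : ∀ p ∈ A, ∀ q ∈ B, ∀ r ∈ C,
        G'.Adj p q → G'.Adj q r → G'.Adj p r → False := by
      intro p hp q hq r hr hpq hqr hpr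
      have hGpq : G.Adj p q := by
        rcases (aug_adj G A C p q).mp hpq with ⟨-, h | h | h⟩
        · exact h
        · exact absurd h.1 (hACn p hp)
        · exact absurd h.1 (hBCn q hq)
      have hGqr : G.Adj q r := by
        rcases (aug_adj G A C q r).mp hqr with ⟨-, h | h | h⟩
        · exact h
        · exact absurd h.1 (hBCn q hq)
        · exact absurd hq (hABn q h.2.1)
      have hnGpr : ¬ G.Adj p r := hnoAC p hp r hr
      rcases (aug_adj G A C p r).mp hpr with ⟨hne, h | h | h⟩
      · exact hnGpr h
      · exact hACn p hp h.1
      · -- h : r ∈ C ∧ p ∈ A ∧ p ∉ N2 G r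
        exact h.2.2 ⟨fun hh => hnGpr hh.symm, fun hh => hACn p hp (hh ▸ hr),
          ⟨q, hGqr.symm, hGpq.symm⟩⟩
    -- triangle-freeness
    have hfree : G'.CliqueFree 3 := by
      intro s hs
      rw [SimpleGraph.is3Clique_iff] at hs
      obtain ⟨a, b, c, hab, hac, hbc, -⟩ := hs
      rcases hmem a with ha | ha | ha <;> rcases hmem b with hb | hb | hb <;>
        rcases hmem c with hc | hc | hc
      all_goals first
        | exact hSA' a ha b hb hab
        | exact hSA' a ha c hc hac
        | exact hSA' b hb c hc hbc
        | exact hSB' a ha b hb hab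
        | exact hSB' a ha c hc hac
        | exact hSB' b hb c hc hbc
        | exact hSC' a ha b hb hab
        | exact hSC' a ha c hc hac
        | exact hSC' b hb c hc hbc
        | exact key a ha b hb c hc hab hbc hac
        | exact key a ha c hc b hb hac hbc.symm hab
        | exact key b hb a ha c hc hab.symm hac hbc
        | exact key c hc a ha b hb hac.symm hab hbc.symm
        | exact key b hb c hc a ha hbc hac.symm hab.symm
        | exact key c hc b hb a ha hbc.symm hab.symm hac.symm
    -- neighbourhoods into B and C are unchanged
    have hnbB : ∀ v ∈ A, nbrCard G' v B = nbrCard G v B := by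
      intro v hv
      unfold nbrCard
      congr 1
      ext b
      simp only [Set.mem_inter_iff, SimpleGraph.mem_neighborSet, aug_adj]
      constructor
      · rintro ⟨hb, -, h | h | h⟩
        · exact ⟨hb, h⟩
        · exact absurd h.1 (hACn v hv)
        · exact absurd h.1 (hBCn b hb)
      · rintro ⟨hb, h⟩
        exact ⟨hb, h.ne, Or.inl h⟩
    have hnbC : ∀ v ∈ B, nbrCard G' v C = nbrCard G v C := by
      intro v hv
      unfold nbrCard
      congr 1
      ext c
      simp only [Set.mem_inter_iff, SimpleGraph.mem_neighborSet, aug_adj]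
      constructor
      · rintro ⟨hc, -, h | h | h⟩
        · exact ⟨hc, h⟩
        · exact absurd h.1 (hBCn v hv)
        · exact absurd hv (hABn v h.2.1)
      · rintro ⟨hc, h⟩
        exact ⟨hc, h.ne, Or.inl h⟩
    -- neighbourhood of v ∈ C into A
    have hnbA : ∀ v ∈ C, A ∩ (G'.neighborSet v) = A \ (N2 G v ∩ A) := by
      intro v hv
      ext a
      simp only [Set.mem_inter_iff, SimpleGraph.mem_neighborSet, aug_adj, Set.mem_diff]
      constructor
      · rintro ⟨ha, -, h | h | h⟩
        · exact absurd h.symm (hnoAC a ha v hv)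
        · exact ⟨ha, fun hh => h.2.2 hh.1⟩
        · exact absurd h.1 (hACn a ha)
      · rintro ⟨ha, hn2⟩
        refine ⟨ha, fun hh => hACn a ha (hh ▸ hv), Or.inr (Or.inl ⟨hv, ha, fun hh => hn2 ⟨hh, ha⟩⟩)⟩
    refine ⟨V, hV, G', A, B, C, hfree,
      ⟨hAne, hBne, hCne, hAB, hAC, hBC, hcover, hSA', hSB', hSC'⟩, ?_, ?_, ?_⟩
    · intro v hv; rw [hnbB v hv]; exact hdA v hv
    · intro v hv; rw [hnbC v hv]; exact hdB v hv
    · intro v hv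
      have hsub : N2 G v ∩ A ⊆ A := Set.inter_subset_right
      have hcard : nbrCard G' v A = A.ncard - n2card G v A := by
        unfold nbrCard n2card
        rw [hnbA v hv, Set.ncard_diff hsub (Set.toFinite _)]
      have hle : n2card G v A ≤ A.ncard := Set.ncard_le_ncard hsub A.toFinite
      have hb := hN2 v hv
      rw [hcard, Nat.cast_sub hle]
      linarith
  · -- converse
    intro h
    rintro ⟨V, hV, G, A, B, C, hfree,
      ⟨hAne, hBne, hCne, hAB, hAC, hBC, hcover, hSA, hSB, hSC⟩, hdA, hdB, hdC⟩
    apply h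
    set G' := del G A C with hG'
    have hABn : ∀ t, t ∈ A → t ∉ B := fun t ht hh => Set.disjoint_left.mp hAB ht hh
    have hACn : ∀ t, t ∈ A → t ∉ C := fun t ht hh => Set.disjoint_left.mp hAC ht hh
    have hBCn : ∀ t, t ∈ B → t ∉ C := fun t ht hh => Set.disjoint_left.mp hBC ht hh
    have hsub' : ∀ u v, G'.Adj u v → G.Adj u v := fun u v hh => hh.1
    have hSA' : StableSet G' A := fun u hu v hv hh => hSA u hu v hv (hsub' u v hh)
    have hSB' : StableSet G' B := fun u hu v hv hh => hSB u hu v hv (hsub' u v hh)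
    have hSC' : StableSet G' C := fun u hu v hv hh => hSC u hu v hv (hsub' u v hh)
    have hnbB : ∀ v ∈ A, nbrCard G' v B = nbrCard G v B := by
      intro v hv
      unfold nbrCard
      congr 1
      ext b
      simp only [Set.mem_inter_iff, SimpleGraph.mem_neighborSet, del_adj]
      constructor
      · rintro ⟨hb, hh, -⟩; exact ⟨hb, hh⟩
      · rintro ⟨hb, hh⟩
        exact ⟨hb, hh, fun hx => hBCn b hb hx.2, fun hx => hACn v hv hx.1⟩
    have hnbC : ∀ v ∈ B, nbrCard G' v C = nbrCard G v C := by
      intro v hv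
      unfold nbrCard
      congr 1
      ext c
      simp only [Set.mem_inter_iff, SimpleGraph.mem_neighborSet, del_adj]
      constructor
      · rintro ⟨hc, hh, -⟩; exact ⟨hc, hh⟩
      · rintro ⟨hc, hh⟩
        exact ⟨hc, hh, fun hx => hABn v hx.1 hv, fun hx => hBCn v hv hx.1⟩
    refine ⟨V, hV, G', A, B, C,
      ⟨⟨hAne, hBne, hCne, hAB, hAC, hBC, hcover, hSA', hSB', hSC'⟩, ?_, ?_, ?_⟩, ?_⟩
    · intro v hv; rw [hnbB v hv]; exact hdA v hv
    · intro v hv; rw [hnbC v hv]; exact hdB v hv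
    · intro u hu v hv hadj
      exact hadj.2.1 ⟨hu, hv⟩
    · intro v hv
      -- N²(v) in G' within A avoids the G-neighbours of v
      have hdisj : N2 G' v ∩ A ⊆ A \ (A ∩ G.neighborSet v) := by
        rintro a ⟨⟨hnadj, hne, w, hvw, hwa⟩, haA⟩
        refine ⟨haA, fun hmem => ?_⟩
        have hGva : G.Adj v a := hmem.2
        exact hfree {v, w, a} (SimpleGraph.is3Clique_triple_iff.mpr
          ⟨hvw.1, hGva, hwa.1⟩)
      have hle1 : n2card G' v A ≤ (A \ (A ∩ G.neighborSet v)).ncard :=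
        Set.ncard_le_ncard hdisj (A \ (A ∩ G.neighborSet v)).toFinite
      have hsub2 : A ∩ G.neighborSet v ⊆ A := Set.inter_subset_left
      have heq : (A \ (A ∩ G.neighborSet v)).ncard = A.ncard - nbrCard G v A := by
        unfold nbrCard
        rw [Set.ncard_diff hsub2 (Set.toFinite _)]
      have hle2 : nbrCard G v A ≤ A.ncard := Set.ncard_le_ncard hsub2 A.toFinite
      have hb := hdC v hv
      have : (n2card G' v A : ℝ) ≤ (A.ncard : ℝ) - nbrCard G v A := by
        rw [← Nat.cast_sub hle2, ← heq]
        exact_mod_cast hle1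
      linarith
end
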